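/- arXiv:1305.1541 — 6 statements merged into one kernel-verified Lean document; each statement's English description precedes it below -/
import Mathlib

section
/- Let p be a prime, let A and B be cyclic groups of order p, and let N = A ∗ B be their free product. Then the kernel Γ of the canonical surjection N → A × B equals the commutator subgroup of N, and Γ is a free group of rank (p−1)^2; more precisely, Γ is freely generated by the commutators [a,b] = a b a^{−1} b^{−1} for a ∈ A∖{1} and b ∈ B∖{1}. -/
open Monoid
open scoped commutatorElement

namespace SubraoAux

variable {A B : Type} [Group A] [Group B]

abbrev S (A B : Type) [Group A] [Group B] : Type := {a : A // a ≠ 1} × {b : B // b ≠ 1}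

open scoped Classical in
noncomputable def C (x : A) (y : B) : FreeGroup (S A B) :=
  if h : x ≠ 1 ∧ y ≠ 1 then FreeGroup.of (⟨x, h.1⟩, ⟨y, h.2⟩) else 1

lemma C_one_left (y : B) : C (1 : A) y = 1 := dif_neg (by simp)
lemma C_one_right (x : A) : C x (1 : B) = 1 := dif_neg (by simp)
lemma C_self (s : S A B) : C (s.1.1 : A) (s.2.1 : B) = FreeGroup.of s := by
  rw [C, dif_pos ⟨s.1.2, s.2.2⟩]

noncomputable def ι : FreeGroup (S A B) →* Coprod A B :=
  FreeGroup.lift fun s => ⁅(Coprod.inl s.1.1 : Coprod A B), Coprod.inr s.2.1⁆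

lemma ι_C (x : A) (y : B) :
    ι (C x y) = ⁅(Coprod.inl x : Coprod A B), Coprod.inr y⁆ := by
  rw [C]
  split
  · exact FreeGroup.lift_apply_of
  · rename_i h
    rcases not_and_or.mp h with h | h
    · rw [map_one, not_not.mp h, map_one, commutatorElement_one_left]
    · rw [map_one, not_not.mp h, map_one, commutatorElement_one_right]

noncomputable def F (a : A) (b : B) : FreeGroup (S A B) := C a⁻¹ b⁻¹

lemma F_one_left (b : B) : F (1 : A) b = 1 := by rw [F, inv_one, C_one_left]
lemma F_one_right (a : A) : F a (1 : B) = 1 := by rw [F, inv_one, C_one_right]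
lemma F_inv (s : S A B) : F (s.1.1 : A)⁻¹ (s.2.1 : B)⁻¹ = FreeGroup.of s := by
  rw [F, inv_inv, inv_inv, C_self]
lemma ι_F (a : A) (b : B) :
    ι (F a b) = ⁅(Coprod.inl a⁻¹ : Coprod A B), Coprod.inr b⁻¹⁆ := ι_C _ _

/-- The normal-form state space. -/
abbrev X (A B : Type) [Group A] [Group B] : Type := A × B × FreeGroup (S A B)

def αe (a' : A) : Equiv.Perm (X A B) where
  toFun x := (a' * x.1, x.2)
  invFun x := (a'⁻¹ * x.1, x.2)
  left_inv x := by simp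
  right_inv x := by simp

noncomputable def βe (b' : B) : Equiv.Perm (X A B) where
  toFun x := (x.1, b' * x.2.1, (F x.1 (b' * x.2.1))⁻¹ * F x.1 x.2.1 * x.2.2)
  invFun x := (x.1, b'⁻¹ * x.2.1, (F x.1 (b'⁻¹ * x.2.1))⁻¹ * F x.1 x.2.1 * x.2.2)
  left_inv x := by simp [mul_assoc]
  right_inv x := by simp [mul_assoc]

def αh : A →* Equiv.Perm (X A B) where
  toFun := αe
  map_one' := by ext x <;> simp [αe]
  map_mul' a₁ a₂ := by ext x <;> simp [αe, mul_assoc]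

noncomputable def βh : B →* Equiv.Perm (X A B) where
  toFun := βe
  map_one' := by ext x <;> simp [βe]
  map_mul' b₁ b₂ := by ext x <;> simp [βe, mul_assoc]

noncomputable def Φ : Coprod A B →* Equiv.Perm (X A B) := Coprod.lift αh βh

lemma Φ_inl (a' : A) (x : X A B) : Φ (Coprod.inl a') x = (a' * x.1, x.2) := by
  rw [Φ, Coprod.lift_apply_inl]; rfl

lemma Φ_inr (b' : B) (x : X A B) :
    Φ (Coprod.inr b') x
      = (x.1, b' * x.2.1, (F x.1 (b' * x.2.1))⁻¹ * F x.1 x.2.1 * x.2.2) := by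
  rw [Φ, Coprod.lift_apply_inr]; rfl

/-- The normal-form evaluation map. -/
noncomputable def φ (x : X A B) : Coprod A B :=
  Coprod.inl x.1 * Coprod.inr x.2.1 * ι x.2.2

lemma keyid {G : Type*} [Group G] (x y z : G) :
    x * (z * y) * ⁅x⁻¹, (z * y)⁻¹⁆⁻¹ * ⁅x⁻¹, y⁻¹⁆ = z * x * y := by
  simp only [commutatorElement_def]
  group

lemma equivar (n : Coprod A B) : ∀ x : X A B, φ (Φ n x) = n * φ x := by
  induction n using Coprod.induction_on with
  | inl a' =>
      intro x
      rw [Φ_inl, φ, φ]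
      simp only [map_mul, mul_assoc]
  | inr b' =>
      intro x
      rw [Φ_inr, φ, φ]
      simp only [map_mul, map_inv, ι_F, commutatorElement_def]
      group
  | mul m n hm hn =>
      intro x
      rw [map_mul, Equiv.Perm.mul_apply, hm, hn, mul_assoc]

lemma fiber (u : FreeGroup (S A B)) :
    ∀ w : FreeGroup (S A B), Φ (ι u) (1, 1, w) = (1, 1, u * w) := by
  induction u using FreeGroup.induction_on with
  | C1 => intro w; simp
  | of s =>
      intro w
      have hpure : (pure s : FreeGroup (S A B)) = FreeGroup.of s := rfl
      have hc : ⁅(Coprod.inl (s.1.1 : A) : Coprod A B), Coprod.inr (s.2.1 : B)⁆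
          = Coprod.inl (s.1.1 : A) * Coprod.inr (s.2.1 : B) *
            Coprod.inl ((s.1.1 : A))⁻¹ * Coprod.inr ((s.2.1 : B))⁻¹ := by
        rw [commutatorElement_def, map_inv, map_inv]
      rw [ι, FreeGroup.lift_apply_of, hc]
      simp only [map_mul, Equiv.Perm.mul_apply]
      rw [Φ_inr ((s.2.1 : B))⁻¹ (1, 1, w)]
      simp only [mul_one, F_one_left, inv_one, one_mul]
      rw [Φ_inl ((s.1.1 : A))⁻¹ (1, (s.2.1 : B)⁻¹, w)]
      simp only [mul_one]
      rw [Φ_inr (s.2.1 : B) ((s.1.1 : A)⁻¹, (s.2.1 : B)⁻¹, w)]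
      simp only [mul_inv_cancel, F_one_right, inv_one, one_mul, F_inv]
      rw [Φ_inl (s.1.1 : A) ((s.1.1 : A)⁻¹, 1, FreeGroup.of s * w)]
      simp [hpure]
  | inv_of s hs =>
      intro w
      rw [map_inv, map_inv]
      apply (Φ (ι (FreeGroup.of s))).injective
      rw [Equiv.Perm.coe_inv, Equiv.apply_symm_apply, hs, mul_inv_cancel_left]
  | mul u v hu hv =>
      intro w
      simp only [map_mul, Equiv.Perm.mul_apply, hv, hu, mul_assoc]


lemma inj_ι : Function.Injective (ι : FreeGroup (S A B) →* Coprod A B) := by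
  intro u v h
  have h1 := fiber u 1
  rw [h, fiber v 1] at h1
  have := h1
  simp only [Prod.mk.injEq, mul_one] at this
  exact this.2.2.symm

lemma normal_form (n : Coprod A B) :
    n = Coprod.inl (Φ n ((1 : A), (1 : B), (1 : FreeGroup (S A B)))).1 *
        Coprod.inr (Φ n ((1 : A), (1 : B), (1 : FreeGroup (S A B)))).2.1 *
        ι (Φ n ((1 : A), (1 : B), (1 : FreeGroup (S A B)))).2.2 := by
  have := equivar n ((1 : A), (1 : B), (1 : FreeGroup (S A B)))
  rw [φ] at this
  simp only [φ, map_one, mul_one, one_mul] at this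
  exact this.symm

lemma π_ι (w : FreeGroup (S A B)) :
    Coprod.lift (MonoidHom.inl A B) (MonoidHom.inr A B) (ι w) = 1 := by
  induction w using FreeGroup.induction_on with
  | C1 => simp
  | of s =>
      have hpure : (pure s : FreeGroup (S A B)) = FreeGroup.of s := rfl
      rw [ι, FreeGroup.lift_apply_of, map_commutatorElement,
        Coprod.lift_apply_inl, Coprod.lift_apply_inr]
      rw [commutatorElement_def]
      ext <;> simp
  | inv_of s hs => rw [map_inv, map_inv, hs, inv_one]
  | mul u v hu hv => rw [map_mul, map_mul, hu, hv, one_mul]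

lemma mem_ker_iff (n : Coprod A B) :
    Coprod.lift (MonoidHom.inl A B) (MonoidHom.inr A B) n = 1 ↔
      ∃ w : FreeGroup (S A B), ι w = n := by
  constructor
  · intro h
    refine ⟨(Φ n ((1 : A), (1 : B), (1 : FreeGroup (S A B)))).2.2, ?_⟩
    have hn := normal_form n
    set x := Φ n ((1 : A), (1 : B), (1 : FreeGroup (S A B))) with hx
    have : Coprod.lift (MonoidHom.inl A B) (MonoidHom.inr A B) n = (x.1, x.2.1) := by
      rw [hn, map_mul, map_mul, π_ι, mul_one, Coprod.lift_apply_inl, Coprod.lift_apply_inr]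
      ext <;> simp
    rw [h] at this
    have h1 : x.1 = 1 := congrArg Prod.fst this.symm
    have h2 : x.2.1 = 1 := congrArg Prod.snd this.symm
    rw [hn, h1, h2, map_one, map_one, one_mul, one_mul]
  · rintro ⟨w, rfl⟩
    exact π_ι w

lemma ι_mem_commutator (w : FreeGroup (S A B)) : ι w ∈ commutator (Coprod A B) := by
  induction w using FreeGroup.induction_on with
  | C1 => simp [Subgroup.one_mem]
  | of s =>
      have hpure : (pure s : FreeGroup (S A B)) = FreeGroup.of s := rfl
      rw [ι, FreeGroup.lift_apply_of, commutator_def]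
      exact Subgroup.commutator_mem_commutator (Subgroup.mem_top _) (Subgroup.mem_top _)
  | inv_of s hs => rw [map_inv]; exact Subgroup.inv_mem _ hs
  | mul u v hu hv => rw [map_mul]; exact Subgroup.mul_mem _ hu hv

end SubraoAux

open SubraoAux in
/-- Let `p` be a prime, `A` and `B` cyclic groups of order `p`, and
`N = A ∗ B` their free product.  Then the kernel `Γ` of the canonical surjection
`N → A × B` equals the commutator subgroup of `N`, and `Γ` is a free group of rank
`(p-1)^2`, freely generated by the commutators `⁅a, b⁆` for `a ∈ A \ {1}`, `b ∈ B \ {1}`. -/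
theorem subrao_commutator_free
    (p : ℕ) (hp : p.Prime)
    (A B : Type) [Group A] [Group B] [IsCyclic A] [IsCyclic B]
    (hA : Nat.card A = p) (hB : Nat.card B = p) :
    (Monoid.Coprod.lift ((MonoidHom.inl A B)) ((MonoidHom.inr A B))).ker
        = commutator (Monoid.Coprod A B) ∧
    Nat.card ({a : A // a ≠ 1} × {b : B // b ≠ 1}) = (p - 1) ^ 2 ∧
    ∃ e : FreeGroup ({a : A // a ≠ 1} × {b : B // b ≠ 1}) ≃*
        (commutator (Monoid.Coprod A B)),
      ∀ x : {a : A // a ≠ 1} × {b : B // b ≠ 1},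
        (e (FreeGroup.of x) : Monoid.Coprod A B) =
          ⁅(Monoid.Coprod.inl x.1.1 : Monoid.Coprod A B), (Monoid.Coprod.inr x.2.1 : Monoid.Coprod A B)⁆ := by
  -- the kernel equals the commutator subgroup
  have hker : (Monoid.Coprod.lift ((MonoidHom.inl A B)) ((MonoidHom.inr A B))).ker
      = commutator (Monoid.Coprod A B) := by
    apply le_antisymm
    · intro n hn
      rw [MonoidHom.mem_ker] at hn
      obtain ⟨w, rfl⟩ := (mem_ker_iff n).mp hn
      exact ι_mem_commutator w
    · letI cA : CommGroup A := IsCyclic.commGroup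
      letI cB : CommGroup B := IsCyclic.commGroup
      rw [commutator_def]
      refine (Subgroup.commutator_le).mpr fun g _ h _ => ?_
      rw [MonoidHom.mem_ker, map_commutatorElement]
      refine commutatorElement_eq_one_iff_mul_comm.mpr ?_
      ext
      · exact mul_comm _ _
      · exact mul_comm _ _
  refine ⟨hker, ?_, ?_⟩
  · -- cardinality
    have hA0 : Nat.card A ≠ 0 := by rw [hA]; exact hp.pos.ne'
    have hB0 : Nat.card B ≠ 0 := by rw [hB]; exact hp.pos.ne'
    have fA : Finite A := Nat.finite_of_card_ne_zero hA0
    have fB : Finite B := Nat.finite_of_card_ne_zero hB0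
    letI := Fintype.ofFinite A
    letI := Fintype.ofFinite B
    classical
    have cardA : Nat.card {a : A // a ≠ 1} = p - 1 := by
      rw [Nat.card_eq_fintype_card]
      have : Fintype.card {a : A // ¬ (a = 1)} = Fintype.card A - Fintype.card {a : A // a = 1} :=
        Fintype.card_subtype_compl _
      simpa [Fintype.card_subtype_eq, ← Nat.card_eq_fintype_card, hA] using this
    have cardB : Nat.card {b : B // b ≠ 1} = p - 1 := by
      rw [Nat.card_eq_fintype_card]
      have : Fintype.card {b : B // ¬ (b = 1)} = Fintype.card B - Fintype.card {b : B // b = 1} :=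
        Fintype.card_subtype_compl _
      simpa [Fintype.card_subtype_eq, ← Nat.card_eq_fintype_card, hB] using this
    rw [Nat.card_prod, cardA, cardB, sq]
  · -- the free group isomorphism
    have hmem : ∀ w : FreeGroup (S A B), ι w ∈ commutator (Monoid.Coprod A B) :=
      ι_mem_commutator
    set j : FreeGroup (S A B) →* (commutator (Monoid.Coprod A B)) :=
      (ι : FreeGroup (S A B) →* Monoid.Coprod A B).codRestrict _ hmem with hj
    have hjinj : Function.Injective j := by
      intro u v huv
      apply inj_ι
      have := congrArg (Subtype.val) huv
      simpa [hj] using this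
    have hjsurj : Function.Surjective j := by
      rintro ⟨n, hn⟩
      rw [← hker, MonoidHom.mem_ker] at hn
      obtain ⟨w, rfl⟩ := (mem_ker_iff n).mp hn
      exact ⟨w, rfl⟩
    refine ⟨MulEquiv.ofBijective j ⟨hjinj, hjsurj⟩, fun x => ?_⟩
    show ((j (FreeGroup.of x) : (commutator (Monoid.Coprod A B))) : Monoid.Coprod A B) = _
    simp only [hj, MonoidHom.codRestrict_apply]
    rw [ι, FreeGroup.lift_apply_of]
end

section
/- Let p be a prime, K a field of characteristic p, and G a finite cyclic p-group. Let V be a finite-dimensional K[G]-module and suppose V = V_1 ⊕ ⋯ ⊕ V_m is a direct sum decomposition into nonzero indecomposable K[G]-submodules. Then m = dim_K V^G, where V^G denotes the subspace of G-invariant vectors of V. -/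
open Polynomial Module DirectSum Function

section Aux
variable {K : Type} [Field K]

lemma aux_sum_zero {ι : Type} [Fintype ι] {V : Type} [AddCommGroup V] [Module K V]
    {A : ι → Submodule K V} (h : iSupIndep A) (g : ι → V) (hg : ∀ i, g i ∈ A i)
    (hsum : ∑ i, g i = 0) (j : ι) : g j = 0 := by
  classical
  have h1 : g j = -∑ i ∈ Finset.univ.erase j, g i :=
    eq_neg_of_add_eq_zero_left (by rw [Finset.add_sum_erase Finset.univ g (Finset.mem_univ j)]; exact hsum)
  have h2 : g j ∈ ⨆ i ≠ j, A i := by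
    rw [h1]
    refine neg_mem (Submodule.sum_mem _ fun i hi => ?_)
    exact Submodule.mem_iSup_of_mem i (Submodule.mem_iSup_of_mem (Finset.mem_erase.mp hi).1 (hg i))
  have h3 : g j ∈ A j ⊓ ⨆ i ≠ j, A i := Submodule.mem_inf.mpr ⟨hg j, h2⟩
  rw [disjoint_iff.mp (h j)] at h3
  simpa using h3

lemma aux_finrank_sum {ι : Type} [Fintype ι] {V : Type} [AddCommGroup V] [Module K V]
    [FiniteDimensional K V] (A : ι → Submodule K V) (P : Submodule K V)
    (hind : iSupIndep A) (hsup : iSup A = P) :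
    Module.finrank K P = ∑ i, Module.finrank K (A i) := by
  classical
  have hA : ∀ i, A i ≤ P := fun i => hsup ▸ le_iSup A i
  set B : ι → Submodule K P := fun i => (A i).comap P.subtype with hB
  have hmapinj := Submodule.map_injective_of_injective (f := P.subtype) Subtype.coe_injective
  have hmapB : ∀ i, (B i).map P.subtype = A i := by
    intro i
    rw [hB]
    rw [Submodule.map_comap_subtype]
    exact inf_eq_right.mpr (hA i)
  have hindB : iSupIndep B := by
    intro j
    rw [disjoint_iff, ← hmapinj.eq_iff, Submodule.map_bot]
    rw [eq_bot_iff]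
    calc (B j ⊓ ⨆ i ≠ j, B i).map P.subtype
        ≤ (B j).map P.subtype ⊓ ((⨆ i ≠ j, B i).map P.subtype) :=
          le_inf (Submodule.map_mono inf_le_left) (Submodule.map_mono inf_le_right)
      _ = A j ⊓ ⨆ i ≠ j, A i := by
          rw [hmapB]
          congr 1
          simp_rw [Submodule.map_iSup, hmapB]
      _ = ⊥ := disjoint_iff.mp (hind j)
  have hsupB : iSup B = ⊤ := by
    apply hmapinj
    rw [Submodule.map_iSup, Submodule.map_top, Submodule.range_subtype]
    refine (iSup_congr hmapB).trans ?_
    exact hsup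
  have hint : DirectSum.IsInternal B :=
    (DirectSum.isInternal_submodule_iff_iSupIndep_and_iSup_eq_top B).mpr ⟨hindB, hsupB⟩
  have e : (⨁ i, B i) ≃ₗ[K] P := LinearEquiv.ofBijective (DirectSum.coeLinearMap B) hint
  rw [← e.finrank_eq, finrank_directSum]
  congr 1
  ext i
  exact (Submodule.comapSubtypeEquivOfLe (hA i)).finrank_eq

lemma aux_ker_cyclic {U : Type} [AddCommGroup U] [Module K U] (S : U →ₗ[K] U)
    (e : ℕ) (he : e ≠ 0)
    (Ψ : U ≃ₗ[K] (K[X] ⧸ (Submodule.span K[X] {(X : K[X]) ^ e})))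
    (hΨ : ∀ u, Ψ (S u) = (X : K[X]) • Ψ u) :
    Module.finrank K (LinearMap.ker S) = 1 := by
  classical
  set Qe := K[X] ⧸ (Submodule.span K[X] {(X : K[X]) ^ e}) with hQe
  set v : Qe := Submodule.Quotient.mk ((X : K[X]) ^ (e - 1)) with hv
  have hee : e - 1 + 1 = e := by omega
  have hXe : (X : K[X]) ^ (e - 1) * X = X ^ e := by rw [← pow_succ, hee]
  have hvne : v ≠ 0 := by
    intro h
    rw [hv, Submodule.Quotient.mk_eq_zero, Submodule.mem_span_singleton] at h
    obtain ⟨c, hc⟩ := h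
    have hdvd : (X : K[X]) ^ e ∣ X ^ (e - 1) := Dvd.intro_left c hc
    have := Polynomial.natDegree_le_of_dvd hdvd (pow_ne_zero _ Polynomial.X_ne_zero)
    simp only [natDegree_pow, natDegree_X, mul_one] at this
    omega
  have hXv : (X : K[X]) • v = 0 := by
    rw [hv, ← Submodule.Quotient.mk_smul, Submodule.Quotient.mk_eq_zero]
    have : (X : K[X]) • (X : K[X]) ^ (e - 1) = X ^ e := by
      rw [smul_eq_mul, mul_comm, hXe]
    rw [this]
    exact Submodule.mem_span_singleton_self _
  have hker : LinearMap.ker S = Submodule.span K {Ψ.symm v} := by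
    apply le_antisymm
    · intro u hu
      rw [LinearMap.mem_ker] at hu
      have h1 : (X : K[X]) • Ψ u = 0 := by rw [← hΨ, hu, map_zero]
      obtain ⟨f, hf⟩ := Submodule.Quotient.mk_surjective _ (Ψ u)
      have h2 : (X : K[X]) ^ e ∣ X * f := by
        have hmk : (Submodule.Quotient.mk (X * f) : Qe) = 0 := by
          rw [← smul_eq_mul, Submodule.Quotient.mk_smul, hf]
          exact h1
        rw [Submodule.Quotient.mk_eq_zero, Submodule.mem_span_singleton] at hmk
        obtain ⟨c, hc⟩ := hmk
        exact Dvd.intro_left c hc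
      have h3 : (X : K[X]) ^ (e - 1) ∣ f := by
        have h4 : (X : K[X]) ^ (e - 1) * X ∣ f * X := by
          rw [hXe, mul_comm f X]; exact h2
        exact (mul_dvd_mul_iff_right (Polynomial.X_ne_zero (R := K))).mp h4
      obtain ⟨h, rfl⟩ := h3
      set c := h.coeff 0 with hc
      have h5 : (X : K[X]) ^ e ∣ X ^ (e - 1) * (h - C c) := by
        have hXd : (X : K[X]) ∣ h - C c := Polynomial.X_dvd_iff.mpr (by simp [hc])
        obtain ⟨h', hh'⟩ := hXd
        exact ⟨h', by rw [hh', ← mul_assoc, hXe]⟩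
      have h6 : Ψ u = c • v := by
        rw [← hf]
        have hsplit : (X : K[X]) ^ (e - 1) * h
            = C c * X ^ (e - 1) + X ^ (e - 1) * (h - C c) := by ring
        rw [hsplit]
        have : (Submodule.Quotient.mk (X ^ (e - 1) * (h - C c)) : Qe) = 0 := by
          rw [Submodule.Quotient.mk_eq_zero, Submodule.mem_span_singleton]
          obtain ⟨w, hw⟩ := h5
          exact ⟨w, by rw [smul_eq_mul, mul_comm]; exact hw.symm⟩
        rw [Submodule.Quotient.mk_add, this, add_zero]
        have : C c * (X : K[X]) ^ (e - 1) = C c • X ^ (e - 1) := rfl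
        rw [this, Submodule.Quotient.mk_smul]
        rw [← Polynomial.algebraMap_eq, algebraMap_smul]
      rw [Submodule.mem_span_singleton]
      exact ⟨c, by rw [← map_smul, ← h6, Ψ.symm_apply_apply]⟩
    · rw [Submodule.span_le, Set.singleton_subset_iff]
      have : S (Ψ.symm v) = 0 := by
        apply Ψ.injective
        rw [hΨ, Ψ.apply_symm_apply, map_zero, hXv]
      exact LinearMap.mem_ker.mpr this
  rw [hker]
  exact finrank_span_singleton (fun h => hvne (by simpa using congrArg Ψ h))

set_option maxHeartbeats 2000000 in
lemma aux_core {U : Type} [AddCommGroup U] [Module K U] [FiniteDimensional K U] [Nontrivial U]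
    (S : U →ₗ[K] U) (q : ℕ) (hq : S ^ q = 0)
    (hind : ¬ ∃ A B : Submodule K U,
      (∀ u ∈ A, S u ∈ A) ∧ (∀ u ∈ B, S u ∈ B) ∧ A ≠ ⊥ ∧ B ≠ ⊥ ∧ A ⊓ B = ⊥ ∧ A ⊔ B = ⊤) :
    Module.finrank K (LinearMap.ker S) = 1 := by
  classical
  set N := Module.AEval' S with hN
  haveI : Nontrivial N := inferInstanceAs (Nontrivial U)
  have htors : Module.IsTorsion K[X] N := by
    intro x
    refine ⟨⟨X ^ q, mem_nonZeroDivisors_of_ne_zero (pow_ne_zero _ Polynomial.X_ne_zero)⟩, ?_⟩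
    show (X ^ q : K[X]) • x = 0
    apply (Module.AEval'.of S).symm.injective
    rw [Module.AEval.of_symm_smul, map_zero, map_pow, Polynomial.aeval_X, hq]
    exact zero_smul _ _
  obtain ⟨ι, hι, pr, hirr, er, ⟨e₀⟩⟩ := Module.equiv_directSum_of_isTorsion htors
  -- transfer of submodules
  set t : Submodule K[X] N → Submodule K U :=
    fun P => (P.restrictScalars K).map (Module.AEval'.of S).symm.toLinearMap with ht
  have hmem : ∀ (P : Submodule K[X] N) (u : U), u ∈ t P ↔ (Module.AEval'.of S u) ∈ P := by
    intro P u
    rw [ht]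
    rw [Submodule.mem_map_equiv]
    simp
  have hNindec : ∀ P₁ P₂ : Submodule K[X] N,
      P₁ ⊓ P₂ = ⊥ → P₁ ⊔ P₂ = ⊤ → P₁ = ⊥ ∨ P₂ = ⊥ := by
    intro P₁ P₂ hinf hsup
    by_contra hcon
    push_neg at hcon
    apply hind
    have hst : ∀ P : Submodule K[X] N, ∀ u ∈ t P, S u ∈ t P := by
      intro P u hu
      rw [hmem] at hu ⊢
      rw [← Module.AEval'.X_smul_of]
      exact P.smul_mem _ hu
    have hnb : ∀ P : Submodule K[X] N, P ≠ ⊥ → t P ≠ ⊥ := by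
      intro P hP
      obtain ⟨x, hx, hx0⟩ := (Submodule.ne_bot_iff _).mp hP
      refine (Submodule.ne_bot_iff _).mpr ⟨(Module.AEval'.of S).symm x, ?_, ?_⟩
      · rw [hmem]; simpa using hx
      · simpa using hx0
    refine ⟨t P₁, t P₂, hst P₁, hst P₂, hnb P₁ hcon.1, hnb P₂ hcon.2, ?_, ?_⟩
    · rw [eq_bot_iff]
      intro u hu
      obtain ⟨h1, h2⟩ := Submodule.mem_inf.mp hu
      rw [hmem] at h1 h2
      have : Module.AEval'.of S u ∈ P₁ ⊓ P₂ := Submodule.mem_inf.mpr ⟨h1, h2⟩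
      rw [hinf, Submodule.mem_bot] at this
      have : u = 0 := by simpa using congrArg (Module.AEval'.of S).symm this
      simp [this]
    · rw [eq_top_iff]
      intro u _
      have : Module.AEval'.of S u ∈ P₁ ⊔ P₂ := by rw [hsup]; trivial
      obtain ⟨a, ha, b, hb, hab⟩ := Submodule.mem_sup.mp this
      refine Submodule.mem_sup.mpr ⟨(Module.AEval'.of S).symm a, ?_, (Module.AEval'.of S).symm b, ?_, ?_⟩
      · rw [hmem]; simpa using ha
      · rw [hmem]; simpa using hb
      · apply (Module.AEval'.of S).injective
        rw [map_add]
        simpa using hab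
  -- the direct sum
  set Q : ι → Type := fun i => K[X] ⧸ (Submodule.span K[X] {pr i ^ er i}) with hQ
  set A' : ι → Submodule K[X] (⨁ i, Q i) := fun i => LinearMap.range (lof K[X] ι Q i) with hA'
  have key : ∀ j j', Nontrivial (Q j) → Nontrivial (Q j') → j = j' := by
    intro j j' hj hj'
    by_contra hne
    have h1 : A' j ⊓ (⨆ i ≠ j, A' i) = ⊥ := by
      rw [eq_bot_iff]
      rintro x hx
      obtain ⟨⟨y, rfl⟩, hx2⟩ := Submodule.mem_inf.mp hx
      have hsub : (⨆ i ≠ j, A' i) ≤ LinearMap.ker (DirectSum.component K[X] ι Q j) := by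
        refine iSup₂_le fun i hij => ?_
        rintro x ⟨z, rfl⟩
        rw [LinearMap.mem_ker, DirectSum.component.of, dif_neg hij]
      have := hsub hx2
      rw [LinearMap.mem_ker, DirectSum.component.lof_self] at this
      rw [this, map_zero]
      exact Submodule.zero_mem _
    have h2 : A' j ⊔ (⨆ i ≠ j, A' i) = ⊤ := by
      rw [eq_top_iff]
      intro x _
      rw [← DirectSum.sum_support_of x]
      refine Submodule.sum_mem _ fun i _ => ?_
      rcases eq_or_ne i j with rfl | hij
      · exact Submodule.mem_sup_left ⟨x i, rfl⟩
      · exact Submodule.mem_sup_right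
          (Submodule.mem_iSup_of_mem i (Submodule.mem_iSup_of_mem hij ⟨x i, rfl⟩))
    have hAne : ∀ i, Nontrivial (Q i) → A' i ≠ ⊥ := by
      intro i hi
      obtain ⟨z, hz⟩ := exists_ne (0 : Q i)
      refine (Submodule.ne_bot_iff _).mpr ⟨lof K[X] ι Q i z, ⟨z, rfl⟩, ?_⟩
      rw [DirectSum.lof_eq_of]
      intro h
      exact hz (DirectSum.of_injective i (by simpa using h))
    have h3 : A' j ≠ ⊥ := hAne j hj
    have h4 : (⨆ i ≠ j, A' i) ≠ ⊥ := by
      intro h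
      apply hAne j' hj'
      rw [eq_bot_iff] at h ⊢
      have hj'ne : j' ≠ j := fun hh => hne hh.symm
      exact le_trans (le_iSup₂ (f := fun i (_ : i ≠ j) => A' i) j' hj'ne) h
    set F := e₀.symm.toLinearMap with hF
    have hinjF : Function.Injective F := e₀.symm.injective
    have := hNindec ((A' j).map F) ((⨆ i ≠ j, A' i).map F)
      (by rw [← Submodule.map_inf _ hinjF, h1, Submodule.map_bot])
      (by rw [← Submodule.map_sup, h2, Submodule.map_top]
          exact LinearEquiv.range e₀.symm)
    have hmapinj := Submodule.map_injective_of_injective hinjF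
    rcases this with h | h
    · exact h3 (hmapinj (by rw [h, Submodule.map_bot]))
    · exact h4 (hmapinj (by rw [h, Submodule.map_bot]))
  -- existence of a nontrivial component
  have hDnt : Nontrivial (⨁ i, Q i) := Equiv.nontrivial e₀.symm.toEquiv
  have hex : ∃ j, Nontrivial (Q j) := by
    by_contra h
    push_neg at h
    have hss : ∀ i, Subsingleton (Q i) := fun i => h i
    have : Subsingleton (⨁ i, Q i) :=
      ⟨fun x y => DirectSum.ext fun i => Subsingleton.elim _ _⟩
    exact (not_subsingleton _) this
  obtain ⟨j, hj⟩ := hex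
  have hsub : ∀ i, i ≠ j → Subsingleton (Q i) := by
    intro i hi
    by_contra h
    exact hi (key i j (not_subsingleton_iff_nontrivial.mp h) hj)
  -- projection equivalence
  have hproj1 : (DirectSum.component K[X] ι Q j).comp (lof K[X] ι Q j) = LinearMap.id :=
    LinearMap.ext fun y => by
      rw [LinearMap.comp_apply, LinearMap.id_apply]
      exact DirectSum.component.lof_self K[X] j y
  have hproj2 : (lof K[X] ι Q j).comp (DirectSum.component K[X] ι Q j) = LinearMap.id := by
    refine LinearMap.ext fun x => ?_
    refine DirectSum.ext fun i => ?_
    rcases eq_or_ne i j with rfl | hij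
    · rw [LinearMap.comp_apply, LinearMap.id_apply]
      exact DirectSum.component.lof_self K[X] i ((DirectSum.component K[X] ι Q i) x)
    · haveI := hsub i hij
      exact Subsingleton.elim _ _
  set projE : (⨁ i, Q i) ≃ₗ[K[X]] Q j :=
    LinearEquiv.ofLinear (DirectSum.component K[X] ι Q j) (lof K[X] ι Q j) hproj1 hproj2 with hprojE
  set Φ : U ≃ₗ[K] Q j :=
    (Module.AEval'.of S).trans ((e₀.trans projE).restrictScalars K) with hΦdef
  have hΦ : ∀ u, Φ (S u) = (X : K[X]) • Φ u := by
    intro u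
    show (e₀.trans projE) (Module.AEval'.of S (S u)) = (X : K[X]) • (e₀.trans projE) (Module.AEval'.of S u)
    rw [← Module.AEval'.X_smul_of, map_smul]
  have hΦpow : ∀ (n : ℕ) (u : U), Φ ((S ^ n) u) = (X : K[X]) ^ n • Φ u := by
    intro n
    induction n with
    | zero => intro u; simp
    | succ n ih =>
      intro u
      rw [pow_succ, Module.End.mul_apply, ih (S u), hΦ u, smul_smul, ← pow_succ]
  have hdvd : pr j ^ er j ∣ (X : K[X]) ^ q := by
    have h0 : ((X : K[X]) ^ q) • (Submodule.Quotient.mk (1 : K[X]) : Q j) = 0 := by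
      have := hΦpow q (Φ.symm (Submodule.Quotient.mk (1 : K[X])))
      rw [hq, Φ.apply_symm_apply] at this
      rw [LinearMap.zero_apply, map_zero] at this
      exact this.symm
    have hmk : (Submodule.Quotient.mk ((X : K[X]) ^ q) : Q j) = 0 := by
      rw [← mul_one ((X : K[X]) ^ q), ← smul_eq_mul, Submodule.Quotient.mk_smul]
      exact h0
    rw [Submodule.Quotient.mk_eq_zero, Submodule.mem_span_singleton] at hmk
    obtain ⟨c, hc⟩ := hmk
    exact Dvd.intro_left c hc
  have her : er j ≠ 0 := by
    intro h0
    have hspan1 : Submodule.span K[X] {pr j ^ er j} = ⊤ := by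
      rw [h0, pow_zero]
      exact Ideal.span_singleton_one
    have : Subsingleton (Q j) := Submodule.Quotient.subsingleton_iff.mpr hspan1
    exact (not_subsingleton (Q j)) this
  have hassoc : Associated (pr j ^ er j) ((X : K[X]) ^ er j) := by
    have hprime : Prime (pr j) := UniqueFactorizationMonoid.irreducible_iff_prime.mp (hirr j)
    have hpX : pr j ∣ X := hprime.dvd_of_dvd_pow (dvd_trans (dvd_pow_self (pr j) her) hdvd)
    exact Associated.pow_pow ((hirr j).associated_of_dvd Polynomial.irreducible_X hpX)
  have hspan : Submodule.span K[X] {pr j ^ er j} = Submodule.span K[X] {(X : K[X]) ^ er j} :=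
    Ideal.span_singleton_eq_span_singleton.mpr hassoc
  set Ψ : U ≃ₗ[K] (K[X] ⧸ (Submodule.span K[X] {(X : K[X]) ^ er j})) :=
    Φ.trans ((Submodule.quotEquivOfEq _ _ hspan).restrictScalars K) with hΨdef
  refine aux_ker_cyclic S (er j) her Ψ ?_
  intro u
  show (Submodule.quotEquivOfEq _ _ hspan) (Φ (S u)) = (X : K[X]) • (Submodule.quotEquivOfEq _ _ hspan) (Φ u)
  rw [hΦ, map_smul]

end Aux

/-- Over a field `K` of characteristic `p`, for a finite cyclic `p`-group `G`
and a finite-dimensional `K[G]`-module `V`, the number of summands in any decomposition of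
`V` into nonzero indecomposable `K[G]`-submodules equals `dim_K V^G`. -/
theorem number_of_indecomposable_summands_eq_dim_invariants
    (p : ℕ) (hp : p.Prime)
    (K : Type) [Field K] [CharP K p]
    (G : Type) [Group G] [Finite G] [IsCyclic G] (hG : IsPGroup p G)
    (V : Type) [AddCommGroup V] [Module K V] [FiniteDimensional K V]
    (ρ : Representation K G V)
    (m : ℕ) (W : Fin m → Submodule K V)
    (hstable : ∀ i, ∀ g : G, ∀ v ∈ W i, ρ g v ∈ W i)
    (hne : ∀ i, W i ≠ ⊥)
    (hindec : ∀ i, ¬ ∃ W₁ W₂ : Submodule K V,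
        W₁ ≤ W i ∧ W₂ ≤ W i ∧
        (∀ g : G, ∀ v ∈ W₁, ρ g v ∈ W₁) ∧ (∀ g : G, ∀ v ∈ W₂, ρ g v ∈ W₂) ∧
        W₁ ≠ ⊥ ∧ W₂ ≠ ⊥ ∧ W₁ ⊓ W₂ = ⊥ ∧ W₁ ⊔ W₂ = W i)
    (hdirect : DirectSum.IsInternal W) :
    m = Module.finrank K ρ.invariants := by
  classical
  by_cases hV : Subsingleton V
  · have hm : m = 0 := by
      by_contra hm
      exact hne ⟨0, Nat.pos_of_ne_zero hm⟩ (Subsingleton.elim _ _)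
    haveI : Subsingleton ρ.invariants := inferInstance
    rw [hm, Module.finrank_zero_of_subsingleton]
  · haveI : Nontrivial V := not_subsingleton_iff_nontrivial.mp hV
    obtain ⟨g₀, hg₀⟩ := IsCyclic.exists_generator (α := G)
    obtain ⟨k, hk⟩ := hG g₀
    set T : Module.End K V := ρ g₀ - 1 with hT
    have hTapp : ∀ v, T v = ρ g₀ v - v := fun v => by
      rw [hT, LinearMap.sub_apply, Module.End.one_apply]
    haveI : Nontrivial (Module.End K V) := by
      obtain ⟨v, hv⟩ := exists_ne (0 : V)
      exact ⟨1, 0, fun h => hv (by simpa using DFunLike.congr_fun h v)⟩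
    haveI : Fact p.Prime := ⟨hp⟩
    haveI : CharP (Module.End K V) p :=
      charP_of_injective_algebraMap (algebraMap K (Module.End K V)).injective p
    have hTq : T ^ (p ^ k) = 0 := by
      rw [hT, sub_pow_char_pow_of_commute p k (Commute.one_right _), one_pow, ← map_pow, hk,
        map_one, sub_self]
    have hTmem : ∀ i, ∀ v ∈ W i, T v ∈ W i := fun i v hv => by
      rw [hTapp]; exact sub_mem (hstable i g₀ v hv) hv
    have hstab_all : ∀ (A : Submodule K V), (∀ v ∈ A, T v ∈ A) → ∀ g : G, ∀ v ∈ A, ρ g v ∈ A := by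
      intro A hA
      have hg0 : ∀ v ∈ A, ρ g₀ v ∈ A := by
        intro v hv
        have h1 : ρ g₀ v = T v + v := by rw [hTapp, sub_add_cancel]
        rw [h1]; exact add_mem (hA v hv) hv
      have hpow : ∀ (n : ℕ), ∀ v ∈ A, ρ (g₀ ^ n) v ∈ A := by
        intro n
        induction n with
        | zero => intro v hv; simpa using hv
        | succ n ih =>
          intro v hv
          rw [pow_succ, map_mul, Module.End.mul_apply]
          exact ih _ (hg0 v hv)
      intro g v hv
      obtain ⟨n, rfl⟩ := mem_powers_iff_mem_zpowers.mpr (hg₀ g)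
      exact hpow n v hv
    have hinv : ρ.invariants = LinearMap.ker T := by
      ext v
      rw [Representation.mem_invariants, LinearMap.mem_ker]
      constructor
      · intro h; rw [hTapp, h g₀, sub_self]
      · intro h g
        have hfix : ρ g₀ v = v := sub_eq_zero.mp (by rw [← hTapp]; exact h)
        have hpow : ∀ n : ℕ, ρ (g₀ ^ n) v = v := by
          intro n; induction n with
          | zero => simp
          | succ n ih => rw [pow_succ, map_mul, Module.End.mul_apply, hfix, ih]
        obtain ⟨n, rfl⟩ := mem_powers_iff_mem_zpowers.mpr (hg₀ g)
        exact hpow n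
    set Wk : Fin m → Submodule K V := fun i => W i ⊓ LinearMap.ker T with hWk
    have hone : ∀ i, Module.finrank K (Wk i) = 1 := by
      intro i
      haveI : Nontrivial (W i) := Submodule.nontrivial_iff_ne_bot.mpr (hne i)
      set S : W i →ₗ[K] W i := T.restrict (hTmem i) with hS
      have hSq : S ^ (p ^ k) = 0 := by
        rw [hS, Module.End.pow_restrict]
        refine LinearMap.ext fun u => Subtype.ext ?_
        rw [LinearMap.restrict_apply]
        simp [hTq]
      have hSind : ¬ ∃ A B : Submodule K (W i),
          (∀ u ∈ A, S u ∈ A) ∧ (∀ u ∈ B, S u ∈ B) ∧ A ≠ ⊥ ∧ B ≠ ⊥ ∧ A ⊓ B = ⊥ ∧ A ⊔ B = ⊤ := by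
        rintro ⟨A, B, hA, hB, hA0, hB0, hAB, hABs⟩
        apply hindec i
        have hsubinj : Function.Injective (W i).subtype := Subtype.coe_injective
        have hmapinj := Submodule.map_injective_of_injective hsubinj
        have hstabT : ∀ (C : Submodule K (W i)), (∀ u ∈ C, S u ∈ C) →
            ∀ v ∈ C.map (W i).subtype, T v ∈ C.map (W i).subtype := by
          rintro C hC v ⟨u, hu, rfl⟩
          exact ⟨S u, hC u hu, LinearMap.restrict_coe_apply T (hTmem i) u⟩
        refine ⟨A.map (W i).subtype, B.map (W i).subtype,
          Submodule.map_subtype_le _ _, Submodule.map_subtype_le _ _,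
          hstab_all _ (hstabT A hA), hstab_all _ (hstabT B hB), ?_, ?_, ?_, ?_⟩
        · intro h; exact hA0 (hmapinj (by rw [h, Submodule.map_bot]))
        · intro h; exact hB0 (hmapinj (by rw [h, Submodule.map_bot]))
        · rw [← Submodule.map_inf _ hsubinj, hAB, Submodule.map_bot]
        · rw [← Submodule.map_sup, hABs, Submodule.map_top, Submodule.range_subtype]
      have hkerS := aux_core S (p ^ k) hSq hSind
      have hcomap : LinearMap.ker S = (Wk i).comap (W i).subtype := by
        ext u
        rw [LinearMap.mem_ker, Submodule.mem_comap, hWk]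
        simp only [Submodule.mem_inf]
        constructor
        · intro h
          refine ⟨u.2, LinearMap.mem_ker.mpr ?_⟩
          have h3 : (↑(S u) : V) = T ↑u := LinearMap.restrict_coe_apply T (hTmem i) u
          rw [h] at h3
          simpa using h3.symm
        · rintro ⟨-, h2⟩
          apply Subtype.ext
          rw [LinearMap.restrict_coe_apply]
          exact LinearMap.mem_ker.mp h2
      have heq := (Submodule.comapSubtypeEquivOfLe (inf_le_left : Wk i ≤ W i)).finrank_eq
      rw [← heq, ← hcomap, hkerS]
    have hker_sup : (⨆ i, Wk i) = LinearMap.ker T := by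
      apply le_antisymm
      · exact iSup_le fun i => inf_le_right
      · intro v hv
        have hvtop : v ∈ ⨆ i, W i := by rw [hdirect.submodule_iSup_eq_top]; trivial
        obtain ⟨f, hf1, hf2⟩ := (Submodule.mem_iSup_iff_exists_finsupp _ _).mp hvtop
        have hfin : (f.sum fun _ x => x) = ∑ i, f i := by
          rw [Finsupp.sum_fintype]; intro; rfl
        have hsumT : ∑ i, T (f i) = 0 := by
          rw [← map_sum, ← hfin, hf2]; exact LinearMap.mem_ker.mp hv
        have hTzero : ∀ i0, T (f i0) = 0 := fun i0 =>
          aux_sum_zero hdirect.submodule_iSupIndep (fun i => T (f i))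
            (fun i => hTmem i _ (hf1 i)) hsumT i0
        have hmemk : ∀ i, f i ∈ Wk i := fun i =>
          Submodule.mem_inf.mpr ⟨hf1 i, LinearMap.mem_ker.mpr (hTzero i)⟩
        rw [← hf2, hfin]
        exact Submodule.sum_mem _ fun i _ => Submodule.mem_iSup_of_mem i (hmemk i)
    have hsum := aux_finrank_sum Wk (LinearMap.ker T)
      (hdirect.submodule_iSupIndep.mono (fun i => inf_le_left)) hker_sup
    rw [hinv, hsum]
    simp [hone]
end

section
/- Let p be a prime, let A = ⟨ε_A⟩ and B be cyclic groups of order p, N = A ∗ B their free product, and Γ the commutator subgroup of N. The group A acts on the abelianization Γ^{ab} = Γ/[Γ,Γ] by conjugation, making Γ^{ab} a module over the integral group ring Z[A]. Then Γ^{ab} is isomorphic as a Z[A]-module to the direct sum of p−1 copies of Z[A]/(1 + ε_A + ε_A^2 + ⋯ + ε_A^{p−1}), i.e., of p−1 copies of the integral representation of A of degree p−1 given by the companion matrix of the p-th cyclotomic polynomial. -/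
/-- Conjugation by an element of the ambient group, restricted to the commutator subgroup. -/
def conjCommutator {N : Type} [Group N] (x : N) :
    commutator N →* commutator N where
  toFun γ := ⟨x * (γ : N) * x⁻¹,
    Subgroup.Normal.conj_mem inferInstance (γ : N) γ.2 x⟩
  map_one' := by
    ext; simp
  map_mul' γ η := by
    ext; simp only [Subgroup.coe_mul, Submonoid.coe_mul]; group

/-- The automorphism of the abelianization of the commutator subgroup induced by
conjugation by `x`. -/
def conjAb {N : Type} [Group N] (x : N) :
    Abelianization (commutator N) →* Abelianization (commutator N) :=
  Abelianization.map (conjCommutator x)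

open scoped commutatorElement

namespace ST4

noncomputable section

open Monoid

variable {A B : Type} [Group A] [Group B]

/-- The abelianization of the commutator subgroup, written additively. -/
abbrev V (A B : Type) [Group A] [Group B] : Type :=
  Additive (Abelianization (commutator (Monoid.Coprod A B)))

/-- The conjugation action, as an additive monoid hom. -/
def act (q : Monoid.Coprod A B) : V A B →+ V A B :=
  MonoidHom.toAdditive (conjAb q)

theorem of_surj {G : Type} [Group G] : Function.Surjective (Abelianization.of (G := G)) :=
  fun x => QuotientGroup.induction_on x fun g => ⟨g, rfl⟩

theorem V_cases (v : V A B) :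
    ∃ γ : commutator (Monoid.Coprod A B), v = Additive.ofMul (Abelianization.of γ) := by
  obtain ⟨γ, hγ⟩ := of_surj (Additive.toMul v)
  exact ⟨γ, by rw [hγ]; exact (Additive.ofMul.apply_symm_apply v).symm⟩

theorem act_ofMul (q : Monoid.Coprod A B) (γ : commutator (Monoid.Coprod A B)) :
    act q (Additive.ofMul (Abelianization.of γ)) =
      Additive.ofMul (Abelianization.of (conjCommutator q γ)) := by
  show Additive.ofMul (conjAb q (Abelianization.of γ)) = _
  rw [conjAb, Abelianization.map_of]

theorem conjCommutator_mul (q r : Monoid.Coprod A B) (γ : commutator (Monoid.Coprod A B)) :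
    conjCommutator (q * r) γ = conjCommutator q (conjCommutator r γ) := by
  ext
  show (q * r) * (γ : Monoid.Coprod A B) * (q * r)⁻¹
      = q * (r * (γ : Monoid.Coprod A B) * r⁻¹) * q⁻¹
  group

theorem conjCommutator_one (γ : commutator (Monoid.Coprod A B)) :
    conjCommutator (1 : Monoid.Coprod A B) γ = γ := by
  ext
  show (1 : Monoid.Coprod A B) * (γ : Monoid.Coprod A B) * (1 : Monoid.Coprod A B)⁻¹
      = (γ : Monoid.Coprod A B)
  group

theorem act_mul (q r : Monoid.Coprod A B) (v : V A B) :
    act (q * r) v = act q (act r v) := by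
  obtain ⟨γ, rfl⟩ := V_cases v
  rw [act_ofMul, act_ofMul, act_ofMul, conjCommutator_mul]

theorem act_one (v : V A B) : act (1 : Monoid.Coprod A B) v = v := by
  obtain ⟨γ, rfl⟩ := V_cases v
  rw [act_ofMul, conjCommutator_one]

/-- The basic commutator `⁅inl a, inr b⁆` as an element of the commutator subgroup. -/
def gel (a : A) (b : B) : commutator (Monoid.Coprod A B) :=
  ⟨⁅Monoid.Coprod.inl a, Monoid.Coprod.inr b⁆, by
    rw [commutator_def]
    exact Subgroup.commutator_mem_commutator (Subgroup.mem_top _) (Subgroup.mem_top _)⟩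

/-- Its class in the abelianization. -/
def cel (a : A) (b : B) : V A B := Additive.ofMul (Abelianization.of (gel a b))

theorem gel_one_left (b : B) : gel (1 : A) b = 1 := by
  ext
  show ⁅(Monoid.Coprod.inl (1 : A) : Monoid.Coprod A B), Monoid.Coprod.inr b⁆
      = (1 : Monoid.Coprod A B)
  rw [map_one]
  simp [commutatorElement_def]

theorem gel_one_right (a : A) : gel a (1 : B) = 1 := by
  ext
  show ⁅(Monoid.Coprod.inl a : Monoid.Coprod A B), Monoid.Coprod.inr (1 : B)⁆
      = (1 : Monoid.Coprod A B)
  rw [map_one]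
  simp [commutatorElement_def]

theorem cel_one_left (b : B) : cel (1 : A) b = 0 := by
  rw [cel, gel_one_left, map_one]
  rfl

theorem cel_one_right (a : A) : cel a (1 : B) = 0 := by
  rw [cel, gel_one_right, map_one]
  rfl

theorem conj_inl (a' a : A) (b : B) :
    conjCommutator (Monoid.Coprod.inl a') (gel a b) = gel (a' * a) b * (gel a' b)⁻¹ := by
  ext
  show Monoid.Coprod.inl a' * ⁅(Monoid.Coprod.inl a : Monoid.Coprod A B), Monoid.Coprod.inr b⁆
        * (Monoid.Coprod.inl a')⁻¹
      = ⁅(Monoid.Coprod.inl (a' * a) : Monoid.Coprod A B), Monoid.Coprod.inr b⁆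
        * ⁅(Monoid.Coprod.inl a' : Monoid.Coprod A B), Monoid.Coprod.inr b⁆⁻¹
  rw [map_mul]
  group

theorem conj_inr (b' : B) (a : A) (b : B) :
    conjCommutator (Monoid.Coprod.inr b') (gel a b) = (gel a b')⁻¹ * gel a (b' * b) := by
  ext
  show Monoid.Coprod.inr b' * ⁅(Monoid.Coprod.inl a : Monoid.Coprod A B), Monoid.Coprod.inr b⁆
        * (Monoid.Coprod.inr b')⁻¹
      = ⁅(Monoid.Coprod.inl a : Monoid.Coprod A B), Monoid.Coprod.inr b'⁆⁻¹
        * ⁅(Monoid.Coprod.inl a : Monoid.Coprod A B), Monoid.Coprod.inr (b' * b)⁆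
  rw [map_mul]
  group

theorem act_inl_cel (a' a : A) (b : B) :
    act (Monoid.Coprod.inl a') (cel a b) = cel (a' * a) b - cel a' b := by
  rw [cel, act_ofMul, conj_inl, map_mul, map_inv]
  rfl

theorem act_inr_cel (b' : B) (a : A) (b : B) :
    act (Monoid.Coprod.inr b') (cel a b) = cel a (b' * b) - cel a b' := by
  rw [cel, act_ofMul, conj_inr, map_mul, map_inv, mul_comm]
  rfl

/-- The conjugation representation of `A` on `V`. -/
def rho : Representation ℤ A (V A B) where
  toFun a := (act (Monoid.Coprod.inl a)).toIntLinearMap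
  map_one' := by
    ext v
    show act (Monoid.Coprod.inl (1 : A)) v = v
    rw [map_one]; exact act_one v
  map_mul' a a' := by
    ext v
    show act (Monoid.Coprod.inl (a * a')) v
      = act (Monoid.Coprod.inl a) (act (Monoid.Coprod.inl a') v)
    rw [map_mul, act_mul]

theorem rho_apply (a : A) (v : V A B) :
    rho a v = act (Monoid.Coprod.inl a) v := rfl

section Nu

variable (εA : A) (p : ℕ)

/-- The norm element. -/
abbrev nuEl : MonoidAlgebra ℤ A :=
  ∑ i ∈ Finset.range p, MonoidAlgebra.of ℤ A (εA ^ i)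

/-- The cyclic quotient module. -/
abbrev RQ : Type := MonoidAlgebra ℤ A ⧸ Ideal.span {nuEl εA p}

theorem exists_pow_eq {G : Type} [Group G] {x : G} (hx : 0 < orderOf x) {a : G}
    (ha : a ∈ Subgroup.zpowers x) : ∃ k : ℕ, k < orderOf x ∧ x ^ k = a := by
  obtain ⟨m, rfl⟩ := Subgroup.mem_zpowers_iff.mp ha
  have hne : (orderOf x : ℤ) ≠ 0 := by exact_mod_cast hx.ne'
  have h1 : 0 ≤ m % (orderOf x : ℤ) := Int.emod_nonneg m hne
  have h2 : m % (orderOf x : ℤ) < (orderOf x : ℤ) :=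
    Int.emod_lt_of_pos m (by exact_mod_cast hx)
  refine ⟨(m % (orderOf x : ℤ)).toNat, ?_, ?_⟩
  · omega
  · rw [← zpow_natCast, Int.toNat_of_nonneg h1, zpow_mod_orderOf]

theorem act_pow_cel (i : ℕ) (b : B) :
    act (Monoid.Coprod.inl (εA ^ i)) (cel εA b) = cel (εA ^ (i + 1)) b - cel (εA ^ i) b := by
  rw [act_inl_cel, ← pow_succ]

theorem sum_act_pow_cel (k : ℕ) (b : B) :
    ∑ i ∈ Finset.range k, act (Monoid.Coprod.inl (εA ^ i)) (cel εA b)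
      = cel (εA ^ k) b := by
  calc ∑ i ∈ Finset.range k, act (Monoid.Coprod.inl (εA ^ i)) (cel εA b)
      = ∑ i ∈ Finset.range k, (cel (εA ^ (i + 1)) b - cel (εA ^ i) b) :=
        Finset.sum_congr rfl fun i _ => act_pow_cel εA i b
    _ = cel (εA ^ k) b - cel (εA ^ 0) b := Finset.sum_range_sub _ _
    _ = cel (εA ^ k) b := by rw [pow_zero, cel_one_left, sub_zero]

theorem asAlg_sum_pow (k : ℕ) (b : B) :
    (rho (A := A) (B := B)).asAlgebraHom (∑ i ∈ Finset.range k, MonoidAlgebra.of ℤ A (εA ^ i))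
        (cel εA b) = cel (εA ^ k) b := by
  rw [map_sum, LinearMap.coe_sum, Finset.sum_apply]
  rw [← sum_act_pow_cel εA k b]
  refine Finset.sum_congr rfl fun i _ => ?_
  rw [Representation.asAlgebraHom_of, rho_apply]

theorem nu_smul_cel (hεA : orderOf εA = p) (b : B) :
    (rho (A := A) (B := B)).asAlgebraHom (nuEl εA p) (cel εA b) = 0 := by
  rw [nuEl, asAlg_sum_pow, ← hεA, pow_orderOf_eq_one, cel_one_left]

variable (β : B)

/-- The `j`-th generator. -/
def gj (j : Fin (p - 1)) : V A B := cel εA (β ^ ((j : ℕ) + 1))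

/-- The map from the cyclic module to `Γᵃᵇ` (as `asModule`). -/
noncomputable def Lmap (hεA : orderOf εA = p) (j : Fin (p - 1)) :
    RQ εA p →ₗ[MonoidAlgebra ℤ A] (rho (A := A) (B := B)).asModule :=
  Submodule.liftQ _
    (LinearMap.toSpanSingleton (MonoidAlgebra ℤ A) _
      ((rho (A := A) (B := B)).asModuleEquiv.symm (gj εA p β j)))
    (by
      rw [Ideal.span_le]
      rintro x hx
      rcases Set.mem_singleton_iff.mp hx with rfl
      rw [SetLike.mem_coe, LinearMap.mem_ker, LinearMap.toSpanSingleton_apply]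
      apply (rho (A := A) (B := B)).asModuleEquiv.injective
      rw [Representation.asModuleEquiv_map_smul]
      simp only [AddEquiv.apply_symm_apply, map_zero]
      exact nu_smul_cel εA p hεA _)

/-- The total map. -/
noncomputable def Phi (hεA : orderOf εA = p) :
    (Fin (p - 1) → RQ εA p) →ₗ[MonoidAlgebra ℤ A] (rho (A := A) (B := B)).asModule :=
  LinearMap.lsum (MonoidAlgebra ℤ A) (fun _ : Fin (p - 1) => RQ εA p) ℕ
    (fun j => Lmap εA p β hεA j)

/-- The total map, as a map to `V`. -/
noncomputable def Fhom (hεA : orderOf εA = p) : (Fin (p - 1) → RQ εA p) →+ V A B :=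
  ((rho (A := A) (B := B)).asModuleEquiv.toAddMonoidHom.comp (Phi εA p β hεA).toAddMonoidHom)

theorem Fhom_single (hεA : orderOf εA = p) (j : Fin (p - 1)) (t : MonoidAlgebra ℤ A) :
    Fhom εA p β hεA (Pi.single j (Submodule.Quotient.mk t))
      = (rho (A := A) (B := B)).asAlgebraHom t (gj εA p β j) := by
  show (rho (A := A) (B := B)).asModuleEquiv
      ((Phi εA p β hεA) (Pi.single j (Submodule.Quotient.mk t))) = _
  have h1 : (Phi εA p β hεA) (Pi.single j (Submodule.Quotient.mk t))
      = Lmap εA p β hεA j (Submodule.Quotient.mk t) := by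
    rw [Phi, LinearMap.lsum_apply, LinearMap.sum_apply]
    rw [Finset.sum_eq_single j]
    · simp
    · intro i _ hne
      simp [LinearMap.proj_apply, Pi.single_eq_of_ne hne]
    · intro h
      exact absurd (Finset.mem_univ j) h
  rw [h1, Lmap, Submodule.liftQ_apply, LinearMap.toSpanSingleton_apply,
    Representation.asModuleEquiv_map_smul, LinearEquiv.apply_symm_apply]

end Nu

section Surj

variable (εA : A) (β : B) (p : ℕ)

/-- The set of basic commutators. -/
def Sset (A B : Type) [Group A] [Group B] : Set (Monoid.Coprod A B) :=
  {x | ∃ (a : A) (b : B),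
    x = ⁅(Monoid.Coprod.inl a : Monoid.Coprod A B), (Monoid.Coprod.inr b : Monoid.Coprod A B)⁆}

theorem comm_eq_normalClosure
    (hgenA : ∀ a : A, a ∈ Subgroup.zpowers εA)
    (hgenB : ∀ b : B, b ∈ Subgroup.zpowers β) :
    commutator (Monoid.Coprod A B) = Subgroup.normalClosure (Sset A B) := by
  apply le_antisymm
  · set K := Subgroup.normalClosure (Sset A B) with hK
    have base : ∀ (a : A) (b : B),
        Commute ((QuotientGroup.mk' K) (Monoid.Coprod.inl a))
          ((QuotientGroup.mk' K) (Monoid.Coprod.inr b)) := by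
      intro a b
      rw [← commutatorElement_eq_one_iff_commute, ← map_commutatorElement]
      rw [QuotientGroup.mk'_apply, QuotientGroup.eq_one_iff]
      exact Subgroup.subset_normalClosure ⟨a, b, rfl⟩
    have hcomm : ∀ x y : Monoid.Coprod A B,
        Commute ((QuotientGroup.mk' K) x) ((QuotientGroup.mk' K) y) := by
      intro x y
      induction x using Monoid.Coprod.induction_on with
      | inl a =>
        induction y using Monoid.Coprod.induction_on with
        | inl a' =>
          obtain ⟨m, rfl⟩ := Subgroup.mem_zpowers_iff.mp (hgenA a)
          obtain ⟨n, rfl⟩ := Subgroup.mem_zpowers_iff.mp (hgenA a')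
          exact ((Commute.refl εA).zpow_zpow m n).map
            ((QuotientGroup.mk' K).comp (Monoid.Coprod.inl))
        | inr b => exact base a b
        | mul y z hy hz =>
          rw [map_mul]
          exact hy.mul_right hz
      | inr b =>
        induction y using Monoid.Coprod.induction_on with
        | inl a' => exact (base a' b).symm
        | inr b' =>
          obtain ⟨m, rfl⟩ := Subgroup.mem_zpowers_iff.mp (hgenB b)
          obtain ⟨n, rfl⟩ := Subgroup.mem_zpowers_iff.mp (hgenB b')
          exact ((Commute.refl β).zpow_zpow m n).map
            ((QuotientGroup.mk' K).comp (Monoid.Coprod.inr))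
        | mul y z hy hz =>
          rw [map_mul]
          exact hy.mul_right hz
      | mul x z hx hz =>
        rw [map_mul]
        exact hx.mul_left hz
    rw [commutator_def]
    refine Subgroup.commutator_le.mpr fun g _ h _ => ?_
    have hc := hcomm g h
    rw [← commutatorElement_eq_one_iff_commute, ← map_commutatorElement,
      QuotientGroup.mk'_apply, QuotientGroup.eq_one_iff] at hc
    exact hc
  · refine Subgroup.normalClosure_le_normal ?_
    rintro x ⟨a, b, rfl⟩
    rw [SetLike.mem_coe, commutator_def]
    exact Subgroup.commutator_mem_commutator (Subgroup.mem_top _) (Subgroup.mem_top _)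

/-- The subgroup of `V` generated by the classes of the basic commutators. -/
def Tgrp (A B : Type) [Group A] [Group B] : AddSubgroup (V A B) :=
  AddSubgroup.closure (Set.range fun ab : A × B => cel ab.1 ab.2)

theorem act_mem_T (q : Monoid.Coprod A B) :
    ∀ v ∈ Tgrp A B, act q v ∈ Tgrp A B := by
  induction q using Monoid.Coprod.induction_on with
  | inl a =>
    intro v hv
    refine AddSubgroup.closure_induction ?_ ?_ ?_ ?_ hv
    · rintro w ⟨⟨a', b'⟩, rfl⟩
      dsimp only
      rw [act_inl_cel]
      exact sub_mem (AddSubgroup.subset_closure ⟨(a * a', b'), rfl⟩)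
        (AddSubgroup.subset_closure ⟨(a, b'), rfl⟩)
    · rw [map_zero]; exact zero_mem _
    · intro x y _ _ hx hy; rw [map_add]; exact add_mem hx hy
    · intro x _ hx; rw [map_neg]; exact neg_mem hx
  | inr b =>
    intro v hv
    refine AddSubgroup.closure_induction ?_ ?_ ?_ ?_ hv
    · rintro w ⟨⟨a', b'⟩, rfl⟩
      dsimp only
      rw [act_inr_cel]
      exact sub_mem (AddSubgroup.subset_closure ⟨(a', b * b'), rfl⟩)
        (AddSubgroup.subset_closure ⟨(a', b), rfl⟩)
    · rw [map_zero]; exact zero_mem _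
    · intro x y _ _ hx hy; rw [map_add]; exact add_mem hx hy
    · intro x _ hx; rw [map_neg]; exact neg_mem hx
  | mul x y hx hy =>
    intro v hv
    rw [act_mul]
    exact hx _ (hy _ hv)

theorem T_eq_top
    (hgenA : ∀ a : A, a ∈ Subgroup.zpowers εA)
    (hgenB : ∀ b : B, b ∈ Subgroup.zpowers β) :
    Tgrp A B = ⊤ := by
  rw [eq_top_iff]
  rintro v -
  obtain ⟨γ, rfl⟩ := V_cases v
  have hmemcl : (γ : Monoid.Coprod A B)
      ∈ Subgroup.closure (Group.conjugatesOfSet (Sset A B)) := by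
    exact (comm_eq_normalClosure εA β hgenA hgenB).le γ.2
  have hback : ∀ x : Monoid.Coprod A B,
      x ∈ Subgroup.closure (Group.conjugatesOfSet (Sset A B)) →
        x ∈ commutator (Monoid.Coprod A B) := by
    intro x hx
    exact (comm_eq_normalClosure εA β hgenA hgenB).ge hx
  have key := Subgroup.closure_induction
    (p := fun n _ => ∀ hm : n ∈ commutator (Monoid.Coprod A B),
      Additive.ofMul (Abelianization.of (⟨n, hm⟩ : commutator (Monoid.Coprod A B)))
        ∈ Tgrp A B)
    (fun x hx => by
      rw [Group.mem_conjugatesOfSet_iff] at hx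
      obtain ⟨y, ⟨a, b, rfl⟩, hconj⟩ := hx
      rcases isConj_iff.mp hconj with ⟨q, rfl⟩
      intro hm
      have heq : (⟨q * ⁅(Monoid.Coprod.inl a : Monoid.Coprod A B),
            Monoid.Coprod.inr b⁆ * q⁻¹, hm⟩ : commutator (Monoid.Coprod A B))
          = conjCommutator q (gel a b) := by
        ext; rfl
      rw [heq, ← act_ofMul]
      exact act_mem_T q _ (AddSubgroup.subset_closure ⟨(a, b), rfl⟩))
    (fun hm => by
      have h1 : (⟨(1 : Monoid.Coprod A B), hm⟩ : commutator (Monoid.Coprod A B)) = 1 := rfl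
      rw [h1, map_one]
      exact zero_mem _)
    (fun x y hxc hyc hx hy => by
      intro hm
      have hxm := hback x hxc
      have hym := hback y hyc
      have h1 : (⟨x * y, hm⟩ : commutator (Monoid.Coprod A B))
          = ⟨x, hxm⟩ * ⟨y, hym⟩ := rfl
      rw [h1, map_mul]
      exact add_mem (hx hxm) (hy hym))
    (fun x hxc hx => by
      intro hm
      have hxm := hback x hxc
      have h1 : (⟨x⁻¹, hm⟩ : commutator (Monoid.Coprod A B)) = (⟨x, hxm⟩)⁻¹ := rfl
      rw [h1, map_inv]
      exact neg_mem (hx hxm))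
    hmemcl
  exact key γ.2

theorem Fhom_surj (hp0 : 0 < p) (hεA : orderOf εA = p) (hordβ : orderOf β = p)
    (hgenA : ∀ a : A, a ∈ Subgroup.zpowers εA)
    (hgenB : ∀ b : B, b ∈ Subgroup.zpowers β) :
    Function.Surjective (Fhom εA p β hεA) := by
  intro v
  have hv : v ∈ (Fhom εA p β hεA).range := by
    have hvT : v ∈ Tgrp A B := by
      rw [T_eq_top εA β hgenA hgenB]
      trivial
    refine AddSubgroup.closure_induction ?_ ?_ ?_ ?_ hvT
    · rintro w ⟨⟨a, b⟩, rfl⟩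
      dsimp only
      obtain ⟨k, -, rfl⟩ := exists_pow_eq (by rw [hεA]; exact hp0) (hgenA a)
      obtain ⟨l, hl, rfl⟩ := exists_pow_eq (by rw [hordβ]; exact hp0) (hgenB b)
      rw [hordβ] at hl
      rcases Nat.eq_zero_or_pos l with rfl | hlpos
      · rw [pow_zero, cel_one_right]
        exact zero_mem _
      · have hj : l - 1 < p - 1 := by omega
        refine ⟨Pi.single ⟨l - 1, hj⟩ (Submodule.Quotient.mk
            (∑ i ∈ Finset.range k, MonoidAlgebra.of ℤ A (εA ^ i))), ?_⟩
        rw [Fhom_single]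
        show (rho (A := A) (B := B)).asAlgebraHom _
            (cel εA (β ^ (((⟨l - 1, hj⟩ : Fin (p - 1)) : ℕ) + 1))) = _
        rw [asAlg_sum_pow]
        have hval : (((⟨l - 1, hj⟩ : Fin (p - 1)) : ℕ) + 1) = l := by
          simp only [Fin.val_mk]
          omega
        rw [hval]
    · exact zero_mem _
    · intro x y _ _ hx hy
      exact add_mem hx hy
    · intro x _ hx
      exact neg_mem hx
  exact hv

end Surj

section Inj

/-- Left multiplication automorphisms of the group algebra of `A × B`, multiplicatively. -/
def phiu : (A × B) →* MulAut (Multiplicative (MonoidAlgebra ℤ (A × B))) where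
  toFun q :=
    { toFun := fun v =>
        Multiplicative.ofAdd (MonoidAlgebra.of ℤ (A × B) q * Multiplicative.toAdd v)
      invFun := fun v =>
        Multiplicative.ofAdd (MonoidAlgebra.of ℤ (A × B) q⁻¹ * Multiplicative.toAdd v)
      left_inv := fun v => by
        simp [← mul_assoc, ← map_mul, ← MonoidAlgebra.one_def]
      right_inv := fun v => by
        simp [← mul_assoc, ← map_mul, ← MonoidAlgebra.one_def]
      map_mul' := fun v w => by
        simp [mul_add] }
  map_one' := by
    ext v
    simp [← MonoidAlgebra.one_def]
  map_mul' q r := by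
    ext v
    simp [← mul_assoc, MonoidAlgebra.single_mul_single]

theorem phiu_apply (q : A × B) (v : Multiplicative (MonoidAlgebra ℤ (A × B))) :
    phiu q v = Multiplicative.ofAdd (MonoidAlgebra.of ℤ (A × B) q * Multiplicative.toAdd v) :=
  rfl

/-- The target group. -/
abbrev GG (A B : Type) [Group A] [Group B] : Type :=
  SemidirectProduct (Multiplicative (MonoidAlgebra ℤ (A × B))) (A × B) phiu

/-- The embedding of `B` with cocycle. -/
def thetaB : B →* GG A B where
  toFun b := ⟨Multiplicative.ofAdd (MonoidAlgebra.of ℤ (A × B) (1, b) - 1), (1, b)⟩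
  map_one' := by
    refine SemidirectProduct.ext ?_ rfl
    show Multiplicative.ofAdd (MonoidAlgebra.of ℤ (A × B) (1, (1 : B)) - 1) = 1
    rw [show ((1 : A), (1 : B)) = (1 : A × B) from rfl, map_one, sub_self]
    rfl
  map_mul' b b' := by
    refine SemidirectProduct.ext ?_ ?_
    · show Multiplicative.ofAdd (MonoidAlgebra.of ℤ (A × B) (1, b * b') - 1)
        = Multiplicative.ofAdd (MonoidAlgebra.of ℤ (A × B) (1, b) - 1)
          * phiu (1, b) (Multiplicative.ofAdd (MonoidAlgebra.of ℤ (A × B) (1, b') - 1))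
      rw [phiu_apply, toAdd_ofAdd, ← ofAdd_add]
      congr 1
      have hmul : ((1 : A), b) * ((1 : A), b') = ((1 : A), b * b') := by
        simp [Prod.ext_iff]
      rw [← hmul, map_mul]
      noncomm_ring
    · show ((1 : A), b * b') = ((1 : A), b) * ((1 : A), b')
      simp [Prod.ext_iff]

/-- The derivation-type homomorphism out of the free product. -/
def theta : Monoid.Coprod A B →* GG A B :=
  Monoid.Coprod.lift (SemidirectProduct.inr.comp (MonoidHom.inl A B)) thetaB

theorem theta_inl (a : A) :
    theta (Monoid.Coprod.inl a)
      = (⟨1, ((a, 1) : A × B)⟩ : GG A B) := by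
  rw [theta, Monoid.Coprod.lift_apply_inl]
  rfl

theorem theta_inr (b : B) :
    (theta (Monoid.Coprod.inr b) : GG A B)
      = ⟨Multiplicative.ofAdd (MonoidAlgebra.of ℤ (A × B) (1, b) - 1), (1, b)⟩ := by
  rw [theta, Monoid.Coprod.lift_apply_inr]
  rfl

theorem theta_right_commutator (hco : ∀ x y : A × B, x * y = y * x)
    (γ : commutator (Monoid.Coprod A B)) :
    (theta ((γ : Monoid.Coprod A B))).right = 1 := by
  have hker : commutator (Monoid.Coprod A B)
      ≤ (SemidirectProduct.rightHom.comp (theta (A := A) (B := B))).ker := by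
    rw [commutator_def]
    refine Subgroup.commutator_le.mpr fun g _ h _ => ?_
    rw [MonoidHom.mem_ker, map_commutatorElement]
    exact commutatorElement_eq_one_iff_commute.mpr (hco _ _)
  have h := hker γ.2
  rw [MonoidHom.mem_ker] at h
  exact h

/-- The homomorphism `Γ → ℤ[A×B]`. -/
def chi (hco : ∀ x y : A × B, x * y = y * x) :
    commutator (Monoid.Coprod A B) →* Multiplicative (MonoidAlgebra ℤ (A × B)) where
  toFun γ := (theta ((γ : Monoid.Coprod A B))).left
  map_one' := by
    show (theta ((1 : commutator (Monoid.Coprod A B)) : Monoid.Coprod A B)).left = 1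
    rw [show ((1 : commutator (Monoid.Coprod A B)) : Monoid.Coprod A B) = 1 from rfl, map_one]
    rfl
  map_mul' γ η := by
    show (theta ((γ : Monoid.Coprod A B) * (η : Monoid.Coprod A B))).left = _
    rw [map_mul, SemidirectProduct.mul_left, theta_right_commutator hco γ, map_one]
    rfl

/-- The left inverse-ish map `V → ℤ[A×B]`. -/
def psi (hco : ∀ x y : A × B, x * y = y * x) : V A B →+ MonoidAlgebra ℤ (A × B) :=
  MonoidHom.toAdditiveLeft (Abelianization.lift (chi hco))

theorem psi_ofMul (hco : ∀ x y : A × B, x * y = y * x)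
    (γ : commutator (Monoid.Coprod A B)) :
    psi hco (Additive.ofMul (Abelianization.of γ)) = Multiplicative.toAdd (chi hco γ) := by
  show Multiplicative.toAdd ((Abelianization.lift (chi hco)) (Abelianization.of γ)) = _
  rw [Abelianization.lift_apply_of]

theorem commutator_trick {G : Type} [Group G] (z g h : G) (hgh : g * h = z * (h * g)) :
    ⁅g, h⁆ = z := by
  rw [commutatorElement_def, hgh]
  group

theorem psi_cel (hco : ∀ x y : A × B, x * y = y * x) (a : A) (b : B) :
    psi hco (cel a b) =
      (MonoidAlgebra.of ℤ (A × B) (a, 1) - 1) * (MonoidAlgebra.of ℤ (A × B) (1, b) - 1) := by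
  rw [cel, psi_ofMul]
  show Multiplicative.toAdd ((theta
      (⁅(Monoid.Coprod.inl a : Monoid.Coprod A B), Monoid.Coprod.inr b⁆)).left) = _
  rw [map_commutatorElement, theta_inl, theta_inr]
  have hcz : ⁅(⟨1, ((a, 1) : A × B)⟩ : GG A B),
      (⟨Multiplicative.ofAdd (MonoidAlgebra.of ℤ (A × B) (1, b) - 1), (1, b)⟩ : GG A B)⁆
      = ⟨Multiplicative.ofAdd ((MonoidAlgebra.of ℤ (A × B) (a, 1) - 1)
          * (MonoidAlgebra.of ℤ (A × B) (1, b) - 1)), 1⟩ := by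
    refine commutator_trick _ _ _ ?_
    refine SemidirectProduct.ext ?_ ?_
    · show (1 : Multiplicative (MonoidAlgebra ℤ (A × B)))
          * phiu ((a, 1) : A × B) (Multiplicative.ofAdd (MonoidAlgebra.of ℤ (A × B) (1, b) - 1))
        = Multiplicative.ofAdd ((MonoidAlgebra.of ℤ (A × B) (a, 1) - 1)
            * (MonoidAlgebra.of ℤ (A × B) (1, b) - 1))
          * phiu ((1 : A × B))
            (Multiplicative.ofAdd (MonoidAlgebra.of ℤ (A × B) (1, b) - 1)
              * phiu ((1 : A), b) (1 : Multiplicative (MonoidAlgebra ℤ (A × B))))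
      rw [map_one phiu]
      simp only [one_mul, MulAut.one_apply, phiu_apply, map_one, mul_one,
        toAdd_ofAdd]
      rw [← ofAdd_add]
      congr 1
      noncomm_ring
    · show ((a, 1) : A × B) * (1, b) = 1 * (((1 : A), b) * (a, 1))
      simp [Prod.ext_iff]
  rw [hcz]
  rfl

theorem psi_act (hco : ∀ x y : A × B, x * y = y * x) (q : Monoid.Coprod A B) (v : V A B) :
    psi hco (act q v) = MonoidAlgebra.of ℤ (A × B) ((theta q).right) * psi hco v := by
  obtain ⟨γ, rfl⟩ := V_cases v
  rw [act_ofMul, psi_ofMul, psi_ofMul]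
  show Multiplicative.toAdd
      ((theta (q * (γ : Monoid.Coprod A B) * q⁻¹)).left) = _
  have hr := theta_right_commutator hco γ
  have h2 : (⟨phiu ((theta q).right) ((theta ((γ : Monoid.Coprod A B))).left), 1⟩ : GG A B)
        * theta q = theta q * theta ((γ : Monoid.Coprod A B)) := by
    refine SemidirectProduct.ext ?_ ?_
    · show phiu ((theta q).right) ((theta ((γ : Monoid.Coprod A B))).left)
          * phiu (1 : A × B) ((theta q).left)
        = (theta q).left * phiu ((theta q).right) ((theta ((γ : Monoid.Coprod A B))).left)
      rw [map_one phiu]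
      simp only [MulAut.one_apply]
      exact mul_comm _ _
    · show (1 : A × B) * (theta q).right = (theta q).right * (theta ((γ : Monoid.Coprod A B))).right
      rw [hr, one_mul, mul_one]
  have h3 : theta q * theta ((γ : Monoid.Coprod A B)) * (theta q)⁻¹
      = ⟨phiu ((theta q).right) ((theta ((γ : Monoid.Coprod A B))).left), 1⟩ := by
    rw [← h2]
    group
  rw [map_mul, map_mul, map_inv, h3]
  show Multiplicative.toAdd
      (phiu ((theta q).right) ((theta ((γ : Monoid.Coprod A B))).left)) = _
  rw [phiu_apply]
  rfl

/-- The inclusion ring hom `ℤ[A] → ℤ[A×B]`. -/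
noncomputable def iota : MonoidAlgebra ℤ A →+* MonoidAlgebra ℤ (A × B) :=
  MonoidAlgebra.mapDomainRingHom ℤ (MonoidHom.inl A B)

theorem iota_eq_mapDomain (s : MonoidAlgebra ℤ A) :
    iota (A := A) (B := B) s = MonoidAlgebra.mapDomain (fun a => ((a, 1) : A × B)) s := rfl

theorem iota_single (a : A) (z : ℤ) :
    iota (A := A) (B := B) (MonoidAlgebra.single a z) = MonoidAlgebra.single ((a, 1) : A × B) z := by
  rw [iota_eq_mapDomain, MonoidAlgebra.mapDomain_single]

theorem psi_asAlg (hco : ∀ x y : A × B, x * y = y * x) (t : MonoidAlgebra ℤ A) (v : V A B) :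
    psi hco ((rho (A := A) (B := B)).asAlgebraHom t v) = iota t * psi hco v := by
  induction t using MonoidAlgebra.induction_linear with
  | zero => simp
  | add f g hf hg =>
    rw [map_add, LinearMap.add_apply, map_add, hf, hg, map_add, add_mul]
  | single a z =>
    rw [Representation.asAlgebraHom_single, LinearMap.smul_apply, map_zsmul,
      rho_apply, psi_act hco, iota_single]
    have hright : ((theta (Monoid.Coprod.inl a) : GG A B)).right = ((a, 1) : A × B) := by
      rw [theta_inl]
    rw [hright]
    have h2 : (MonoidAlgebra.single ((a, 1) : A × B) z : MonoidAlgebra ℤ (A × B))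
        = z • MonoidAlgebra.of ℤ (A × B) ((a, 1) : A × B) := by
      rw [MonoidAlgebra.of_apply, MonoidAlgebra.smul_single, smul_eq_mul, mul_one]
    rw [h2, smul_mul_assoc]

theorem iota_apply_inl (s : MonoidAlgebra ℤ A) (a : A) :
    (iota (A := A) (B := B) s).coeff (a, (1 : B)) = s.coeff a := by
  rw [iota_eq_mapDomain]
  exact Finsupp.mapDomain_apply (fun a a' h => by
    simpa [Prod.ext_iff] using h) s.coeff a

theorem iota_apply_ne (s : MonoidAlgebra ℤ A) (a : A) {b : B} (hb : b ≠ 1) :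
    (iota (A := A) (B := B) s).coeff (a, b) = 0 := by
  rw [iota_eq_mapDomain]
  refine Finsupp.mapDomain_notin_range _ _ ?_
  rintro ⟨a', ha'⟩
  rw [Prod.ext_iff] at ha'
  exact hb ha'.2.symm

end Inj

section Ann

variable {εA : A} {p : ℕ}

theorem nu_coeff (hεA : orderOf εA = p) (hp0 : 0 < p)
    (hgenA : ∀ a : A, a ∈ Subgroup.zpowers εA) (a : A) :
    (nuEl εA p).coeff a = 1 := by
  classical
  obtain ⟨k, hk, rfl⟩ := exists_pow_eq (by rw [hεA]; exact hp0) (hgenA a)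
  rw [nuEl, MonoidAlgebra.coeff_sum, Finset.sum_apply']
  rw [Finset.sum_eq_single k]
  · rw [MonoidAlgebra.of_apply, MonoidAlgebra.coeff_single, Finsupp.single_apply, if_pos rfl]
  · intro i hi hne
    rw [MonoidAlgebra.of_apply, MonoidAlgebra.coeff_single, Finsupp.single_apply, if_neg]
    intro heq
    refine hne (pow_injOn_Iio_orderOf ?_ ?_ heq)
    · rw [hεA]
      exact Finset.mem_range.mp hi
    · exact hk
  · intro hk'
    rw [hεA] at hk
    exact absurd (Finset.mem_range.mpr hk) hk'

theorem ann_lemma (hεA : orderOf εA = p) (hp0 : 0 < p)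
    (hgenA : ∀ a : A, a ∈ Subgroup.zpowers εA) (t : MonoidAlgebra ℤ A)
    (h : t * (MonoidAlgebra.of ℤ A εA - 1) = 0) :
    t ∈ Ideal.span {nuEl εA p} := by
  rw [mul_sub, mul_one, sub_eq_zero] at h
  have h2 : ∀ y : A, t.coeff (y * εA⁻¹) = t.coeff y := by
    intro y
    conv_rhs => rw [← h]
    rw [MonoidAlgebra.of_apply, MonoidAlgebra.coeff_mul_single_apply, mul_one]
  have h3 : ∀ k : ℕ, t.coeff (εA ^ k) = t.coeff 1 := by
    intro k
    induction k with
    | zero => rw [pow_zero]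
    | succ n ih =>
      have hh := h2 (εA ^ (n + 1))
      rw [pow_succ, mul_inv_cancel_right] at hh
      rw [pow_succ, ← hh]
      exact ih
  have h4 : ∀ a : A, t.coeff a = t.coeff 1 := by
    intro a
    obtain ⟨k, -, rfl⟩ := exists_pow_eq (by rw [hεA]; exact hp0) (hgenA a)
    exact h3 k
  have h5 : t = MonoidAlgebra.single (1 : A) (t.coeff 1) * nuEl εA p := by
    ext a
    rw [MonoidAlgebra.coeff_single_one_mul, nu_coeff hεA hp0 hgenA a, mul_one, h4 a]
  rw [h5]
  exact Ideal.mul_mem_left _ _ (Ideal.subset_span (Set.mem_singleton _))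

end Ann

section Main

variable (εA : A) (β : B) (p : ℕ)

theorem Qcomm (hgenA : ∀ a : A, a ∈ Subgroup.zpowers εA)
    (hgenB : ∀ b : B, b ∈ Subgroup.zpowers β) :
    ∀ x y : A × B, x * y = y * x := by
  intro x y
  have cA : x.1 * y.1 = y.1 * x.1 := by
    obtain ⟨m, hm⟩ := Subgroup.mem_zpowers_iff.mp (hgenA x.1)
    obtain ⟨n, hn⟩ := Subgroup.mem_zpowers_iff.mp (hgenA y.1)
    rw [← hm, ← hn]
    exact ((Commute.refl εA).zpow_zpow m n).eq
  have cB : x.2 * y.2 = y.2 * x.2 := by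
    obtain ⟨m, hm⟩ := Subgroup.mem_zpowers_iff.mp (hgenB x.2)
    obtain ⟨n, hn⟩ := Subgroup.mem_zpowers_iff.mp (hgenB y.2)
    rw [← hm, ← hn]
    exact ((Commute.refl β).zpow_zpow m n).eq
  exact Prod.ext cA cB

theorem Fhom_inj (hp : p.Prime) (hεA : orderOf εA = p) (hordβ : orderOf β = p)
    (hgenA : ∀ a : A, a ∈ Subgroup.zpowers εA)
    (hgenB : ∀ b : B, b ∈ Subgroup.zpowers β) :
    Function.Injective (Fhom εA p β hεA) := by
  have hco := Qcomm εA β hgenA hgenB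
  rw [injective_iff_map_eq_zero]
  intro x hx
  have hreps : ∀ j, ∃ t, Submodule.Quotient.mk t = x j :=
    fun j => Submodule.Quotient.mk_surjective _ (x j)
  choose t ht using hreps
  have heq : ∑ j : Fin (p - 1), iota (A := A) (B := B) (t j)
      * ((MonoidAlgebra.of ℤ (A × B) (εA, 1) - 1)
        * (MonoidAlgebra.of ℤ (A × B) (1, β ^ ((j : ℕ) + 1)) - 1)) = 0 := by
    have hxsum : Fhom εA p β hεA x
        = ∑ j, Fhom εA p β hεA (Pi.single j (Submodule.Quotient.mk (t j))) := by
      conv_lhs => rw [(Finset.univ_sum_single x).symm]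
      rw [map_sum]
      exact Finset.sum_congr rfl fun j _ => by rw [ht j]
    calc ∑ j : Fin (p - 1), iota (A := A) (B := B) (t j)
          * ((MonoidAlgebra.of ℤ (A × B) (εA, 1) - 1)
            * (MonoidAlgebra.of ℤ (A × B) (1, β ^ ((j : ℕ) + 1)) - 1))
        = ∑ j, psi hco (Fhom εA p β hεA (Pi.single j (Submodule.Quotient.mk (t j)))) := by
          refine Finset.sum_congr rfl fun j _ => ?_
          rw [Fhom_single, psi_asAlg,
            show gj εA p β j = cel εA (β ^ ((j : ℕ) + 1)) from rfl, psi_cel]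
      _ = psi hco (Fhom εA p β hεA x) := by rw [← map_sum, ← hxsum]
      _ = 0 := by rw [hx, map_zero]
  set s : Fin (p - 1) → MonoidAlgebra ℤ A :=
    fun j => t j * (MonoidAlgebra.of ℤ A εA - 1) with hs
  have hiotaeps : iota (A := A) (B := B) (MonoidAlgebra.of ℤ A εA)
      = MonoidAlgebra.of ℤ (A × B) (εA, 1) := by
    rw [MonoidAlgebra.of_apply, iota_single]
    rfl
  have heq2 : ∑ j : Fin (p - 1),
      (iota (A := A) (B := B) (s j) * MonoidAlgebra.of ℤ (A × B) (1, β ^ ((j : ℕ) + 1))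
        - iota (A := A) (B := B) (s j)) = 0 := by
    rw [← heq]
    refine Finset.sum_congr rfl fun j _ => ?_
    simp only [hs]
    rw [map_mul, map_sub, map_one, hiotaeps]
    noncomm_ring
  have hpowne : ∀ m, 0 < m → m < p → β ^ m ≠ 1 := by
    intro m hm0 hmp hone
    have := orderOf_dvd_of_pow_eq_one hone
    rw [hordβ] at this
    have := Nat.le_of_dvd hm0 this
    omega
  have hsz : ∀ k : Fin (p - 1), s k = 0 := by
    intro k
    ext a
    have hne1 : β ^ ((k : ℕ) + 1) ≠ 1 := hpowne _ (by omega) (by omega)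
    have h0 : (∑ j : Fin (p - 1),
        (iota (A := A) (B := B) (s j) * MonoidAlgebra.of ℤ (A × B) (1, β ^ ((j : ℕ) + 1))
          - iota (A := A) (B := B) (s j))).coeff ((a, β ^ ((k : ℕ) + 1)) : A × B)
        = (0 : MonoidAlgebra ℤ (A × B)).coeff ((a, β ^ ((k : ℕ) + 1)) : A × B) := by
      rw [heq2]
    rw [MonoidAlgebra.coeff_sum, Finset.sum_apply', MonoidAlgebra.coeff_zero, Finsupp.coe_zero,
      Pi.zero_apply] at h0
    rw [Finset.sum_eq_single k] at h0
    · rw [MonoidAlgebra.coeff_sub, Finsupp.sub_apply, MonoidAlgebra.of_apply,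
        MonoidAlgebra.coeff_mul_single_apply, mul_one] at h0
      have hpt : ((a, β ^ ((k : ℕ) + 1)) : A × B) * ((1 : A), β ^ ((k : ℕ) + 1))⁻¹
          = (a, (1 : B)) := by
        simp
      rw [hpt, iota_apply_inl, iota_apply_ne _ _ hne1, sub_zero] at h0
      rw [h0]
      rfl
    · intro j _ hjk
      rw [MonoidAlgebra.coeff_sub, Finsupp.sub_apply, MonoidAlgebra.of_apply,
        MonoidAlgebra.coeff_mul_single_apply, mul_one]
      have hpt2 : ((a, β ^ ((k : ℕ) + 1)) : A × B) * ((1 : A), β ^ ((j : ℕ) + 1))⁻¹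
          = (a, β ^ ((k : ℕ) + 1) * (β ^ ((j : ℕ) + 1))⁻¹) := by
        simp
      have hne2 : β ^ ((k : ℕ) + 1) * (β ^ ((j : ℕ) + 1))⁻¹ ≠ 1 := by
        rw [Ne, mul_inv_eq_one]
        intro hkj
        have : (k : ℕ) + 1 = (j : ℕ) + 1 := by
          refine pow_injOn_Iio_orderOf ?_ ?_ hkj
          · rw [hordβ]
            exact Set.mem_Iio.mpr (by omega)
          · rw [hordβ]
            exact Set.mem_Iio.mpr (by omega)
        exact hjk (Fin.ext (by omega)).symm
      rw [hpt2, iota_apply_ne _ _ hne2, iota_apply_ne _ _ hne1, sub_zero]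
    · intro hk'
      exact absurd (Finset.mem_univ k) hk'
  funext k
  show x k = 0
  rw [← ht k, Submodule.Quotient.mk_eq_zero]
  apply ann_lemma hεA hp.pos hgenA
  have hk := hsz k
  rw [hs] at hk
  exact hk

end Main

end

end ST4

/-- Let `A = ⟨ε_A⟩` and `B` be cyclic of prime order `p`, `N = A ∗ B`,
and `Γ = [N,N]`.  Then `Γ^{ab}`, with the conjugation action of `A`, is isomorphic as a
`ℤ[A]`-module to `(ℤ[A]/(1 + ε_A + ⋯ + ε_A^{p-1}))^{p-1}`. -/
theorem abelianization_commutator_as_ZA_module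
    (p : ℕ) (hp : p.Prime)
    (A B : Type) [Group A] [Group B]
    (εA : A) (hεA : orderOf εA = p) (hgenA : ∀ a : A, a ∈ Subgroup.zpowers εA)
    [IsCyclic B] (hB : Nat.card B = p) :
    ∃ e : (Fin (p - 1) →
            (MonoidAlgebra ℤ A ⧸
              Ideal.span {∑ i ∈ Finset.range p, MonoidAlgebra.of ℤ A (εA ^ i)}))
          ≃ₗ[ℤ] Additive (Abelianization (commutator (Monoid.Coprod A B))),
      ∀ (a : A) (x : Fin (p - 1) →
            (MonoidAlgebra ℤ A ⧸
              Ideal.span {∑ i ∈ Finset.range p, MonoidAlgebra.of ℤ A (εA ^ i)})),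
        e (MonoidAlgebra.of ℤ A a • x) =
          Additive.ofMul (conjAb (Monoid.Coprod.inl a) (Additive.toMul (e x))) := by
  classical
  obtain ⟨β, hgenB⟩ := IsCyclic.exists_generator (α := B)
  have hfinB : Finite B := (Nat.card_ne_zero.mp (by rw [hB]; exact hp.ne_zero)).2
  have hordβ : orderOf β = p := by
    cases nonempty_fintype B
    rw [orderOf_eq_card_of_forall_mem_zpowers hgenB]
    exact hB
  refine ⟨(AddEquiv.ofBijective (ST4.Fhom εA p β hεA)
      ⟨ST4.Fhom_inj εA β p hp hεA hordβ hgenA hgenB,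
       ST4.Fhom_surj εA β p hp.pos hεA hordβ hgenA hgenB⟩).toIntLinearEquiv, fun a x => ?_⟩
  show ST4.Fhom εA p β hεA (MonoidAlgebra.of ℤ A a • x) = _
  have h1 : ST4.Fhom εA p β hεA (MonoidAlgebra.of ℤ A a • x)
      = ST4.act (Monoid.Coprod.inl a) (ST4.Fhom εA p β hεA x) := by
    show (ST4.rho (A := A) (B := B)).asModuleEquiv
        ((ST4.Phi εA p β hεA) (MonoidAlgebra.of ℤ A a • x)) = _
    rw [map_smul, Representation.asModuleEquiv_map_smul, Representation.asAlgebraHom_of]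
    rfl
  rw [h1]
  rfl
end

section
/- Let A and B be groups, let N = A ∗ B be their free product, and let P be an abelian group with a right N-action by automorphisms. Then the map Der(A∗B, P) → Der(A,P) × Der(B,P), sending a derivation to the pair of its restrictions to A and to B, is a bijection. -/
/-- Let `A`, `B` be groups, `N = A ∗ B` their free product, and `P` an
abelian group with a right `N`-action by automorphisms.  Then restriction to `A` and `B`
is a bijection `Der(A∗B, P) → Der(A,P) × Der(B,P)`. -/
theorem derivations_coprod_equiv_prod
    (A B P : Type) [Group A] [Group B] [AddCommGroup P]
    (act : Monoid.Coprod A B → (P →+ P))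
    (hact1 : act 1 = AddMonoidHom.id P)
    (hactmul : ∀ γ η : Monoid.Coprod A B, act (γ * η) = (act η).comp (act γ)) :
    Function.Bijective
      (fun d : {d : Monoid.Coprod A B → P //
          ∀ γ η : Monoid.Coprod A B, d (γ * η) = act η (d γ) + d η} =>
        ((⟨fun a : A => d.1 (Monoid.Coprod.inl a), by
            intro a a'
            have := d.2 (Monoid.Coprod.inl a) (Monoid.Coprod.inl a')
            simpa [map_mul] using this⟩,
          ⟨fun b : B => d.1 (Monoid.Coprod.inr b), by
            intro b b'
            have := d.2 (Monoid.Coprod.inr b) (Monoid.Coprod.inr b')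
            simpa [map_mul] using this⟩) :
          {dA : A → P // ∀ a a' : A,
              dA (a * a') = act (Monoid.Coprod.inl a') (dA a) + dA a'} ×
          {dB : B → P // ∀ b b' : B,
              dB (b * b') = act (Monoid.Coprod.inr b') (dB b) + dB b'})) := by
  constructor
  · rintro ⟨d1, h1⟩ ⟨d2, h2⟩ h
    simp only [Prod.mk.injEq, Subtype.mk.injEq] at h
    obtain ⟨hA, hB⟩ := h
    ext γ
    induction γ using Monoid.Coprod.induction_on with
    | inl a => exact congrFun hA a
    | inr b => exact congrFun hB b
    | mul x y hx hy =>
      show d1 (x * y) = d2 (x * y)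
      rw [h1, h2, show d1 x = d2 x from hx, show d1 y = d2 y from hy]
  · rintro ⟨⟨dA, hA⟩, ⟨dB, hB⟩⟩
    -- the semidirect-product monoid `P ⋊ (A ∗ B)`
    letI : Monoid (P × Monoid.Coprod A B) :=
      { mul := fun x y => (act y.2 x.1 + y.1, x.2 * y.2)
        one := ((0 : P), 1)
        mul_assoc := by
          rintro ⟨p, γ⟩ ⟨q, η⟩ ⟨r, θ⟩
          show (act θ (act η p + q) + r, γ * η * θ)
              = (act (η * θ) p + (act θ q + r), γ * (η * θ))
          rw [hactmul η θ]
          simp [mul_assoc, add_assoc]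
        one_mul := by
          rintro ⟨p, γ⟩
          show (act γ 0 + p, 1 * γ) = (p, γ)
          simp
        mul_one := by
          rintro ⟨p, γ⟩
          show (act 1 p + 0, γ * 1) = (p, γ)
          simp [hact1] }
    have dA1 : dA 1 = 0 := by
      have h1 := hA 1 1
      rw [mul_one, map_one, hact1] at h1
      exact right_eq_add.mp h1
    have dB1 : dB 1 = 0 := by
      have h1 := hB 1 1
      rw [mul_one, map_one, hact1] at h1
      exact right_eq_add.mp h1
    set fA : A →* (P × Monoid.Coprod A B) :=
      { toFun := fun a => (dA a, Monoid.Coprod.inl a)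
        map_one' := by
          show (dA 1, Monoid.Coprod.inl (1 : A)) = ((0 : P), 1)
          rw [dA1, map_one]
        map_mul' := by
          intro a a'
          show (dA (a * a'), Monoid.Coprod.inl (a * a'))
              = (act (Monoid.Coprod.inl a') (dA a) + dA a',
                  Monoid.Coprod.inl a * Monoid.Coprod.inl a')
          rw [hA, map_mul] } with hfA
    set fB : B →* (P × Monoid.Coprod A B) :=
      { toFun := fun b => (dB b, Monoid.Coprod.inr b)
        map_one' := by
          show (dB 1, Monoid.Coprod.inr (1 : B)) = ((0 : P), 1)
          rw [dB1, map_one]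
        map_mul' := by
          intro b b'
          show (dB (b * b'), Monoid.Coprod.inr (b * b'))
              = (act (Monoid.Coprod.inr b') (dB b) + dB b',
                  Monoid.Coprod.inr b * Monoid.Coprod.inr b')
          rw [hB, map_mul] } with hfB
    set phi : Monoid.Coprod A B →* (P × Monoid.Coprod A B) := Monoid.Coprod.lift fA fB with hphi
    have hsnd : ∀ γ : Monoid.Coprod A B, (phi γ).2 = γ := by
      intro γ
      induction γ using Monoid.Coprod.induction_on with
      | inl a => rw [hphi, Monoid.Coprod.lift_apply_inl]; rfl
      | inr b => rw [hphi, Monoid.Coprod.lift_apply_inr]; rfl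
      | mul x y hx hy =>
        rw [map_mul]
        show (phi x).2 * (phi y).2 = x * y
        rw [hx, hy]
    refine ⟨⟨fun γ => (phi γ).1, ?_⟩, ?_⟩
    · intro γ η
      show (phi (γ * η)).1 = act η ((phi γ).1) + (phi η).1
      rw [map_mul]
      show act ((phi η).2) ((phi γ).1) + (phi η).1 = _
      rw [hsnd]
    · refine Prod.ext (Subtype.ext ?_) (Subtype.ext ?_)
      · funext a
        show (phi (Monoid.Coprod.inl a)).1 = dA a
        rw [hphi, Monoid.Coprod.lift_apply_inl]; rfl
      · funext b
        show (phi (Monoid.Coprod.inr b)).1 = dB b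
        rw [hphi, Monoid.Coprod.lift_apply_inr]; rfl
end

section
/- Let p be a prime and K a field of characteristic p. Let m ≥ 1 be an integer and write m = qp + r with 0 ≤ r < p. Let V_m ⊆ K[T] be the K-vector space of polynomials of degree < m, and let the cyclic group C = ⟨σ⟩ of order p act K-linearly on V_m by (σ·F)(T) = F(T+1). Then V_m is isomorphic as a K[C]-module to J_p^{⊕q} ⊕ J_r. -/
set_option linter.unusedSectionVars false
set_option linter.unusedVariables false
set_option maxHeartbeats 1000000
set_option synthInstance.maxHeartbeats 400000

open Polynomial

/-- The indecomposable `K[C]`-module `J_ℓ = K[C]/((σ-1)^ℓ)` for a cyclic group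
`C = ⟨σ⟩` of order `p`. -/
abbrev Jmod (K : Type) [Field K] (C : Type) [CommGroup C] (σ : C) (ℓ : ℕ) :=
  MonoidAlgebra K C ⧸ Ideal.span {(MonoidAlgebra.of K C σ - 1) ^ ℓ}

namespace Stmt10

variable {K : Type} [Field K] {C : Type} [CommGroup C]

section glog
variable (K)
variable (σ : C)

/-- a choice of integer logarithm -/
noncomputable def glogK (hgen : ∀ c : C, c ∈ Subgroup.zpowers σ) (c : C) : K :=
  (((Subgroup.mem_zpowers_iff.mp (hgen c)).choose : ℤ) : K)

variable {σ}
variable {p : ℕ} [CharP K p]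

theorem zpow_cast_eq (hσ : orderOf σ = p) {a b : ℤ} (h : σ ^ a = σ ^ b) :
    ((a : K) = (b : K)) := by
  have h1 : σ ^ (a - b) = 1 := by
    rw [zpow_sub, h, mul_inv_cancel]
  have h2 : ((p : ℤ)) ∣ (a - b) := by
    rw [← hσ]; exact_mod_cast orderOf_dvd_iff_zpow_eq_one.mpr h1
  have h3 : ((a - b : ℤ) : K) = 0 := (CharP.intCast_eq_zero_iff K p _).mpr h2
  push_cast at h3
  rw [sub_eq_zero] at h3
  exact h3

theorem glogK_eq (hσ : orderOf σ = p) (hgen : ∀ c : C, c ∈ Subgroup.zpowers σ)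
    {n : ℤ} {c : C} (h : σ ^ n = c) : glogK K σ hgen c = ((n : ℤ) : K) := by
  have hh := (Subgroup.mem_zpowers_iff.mp (hgen c)).choose_spec
  exact zpow_cast_eq K hσ (by rw [hh, h])

theorem glogK_one (hσ : orderOf σ = p) (hgen : ∀ c : C, c ∈ Subgroup.zpowers σ) :
    glogK K σ hgen 1 = 0 := by
  have := glogK_eq (K := K) hσ hgen (n := 0) (zpow_zero σ)
  simpa using this

theorem glogK_sigma (hσ : orderOf σ = p) (hgen : ∀ c : C, c ∈ Subgroup.zpowers σ) :
    glogK K σ hgen σ = 1 := by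
  have := glogK_eq (K := K) hσ hgen (n := 1) (zpow_one σ)
  simpa using this

theorem glogK_mul (hσ : orderOf σ = p) (hgen : ∀ c : C, c ∈ Subgroup.zpowers σ) (c d : C) :
    glogK K σ hgen (c * d) = glogK K σ hgen c + glogK K σ hgen d := by
  obtain ⟨a, ha⟩ := Subgroup.mem_zpowers_iff.mp (hgen c)
  obtain ⟨b, hb⟩ := Subgroup.mem_zpowers_iff.mp (hgen d)
  have h1 := glogK_eq (K := K) hσ hgen ha
  have h2 := glogK_eq (K := K) hσ hgen hb
  have h3 := glogK_eq (K := K) hσ hgen (n := a + b)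
    (by rw [zpow_add, ha, hb])
  rw [h1, h2, h3]; push_cast; ring

/-- glogK is an integer cast, hence fixed by x ↦ x^p -/
theorem glogK_pow_char [Fact p.Prime] (hσ : orderOf σ = p)
    (hgen : ∀ c : C, c ∈ Subgroup.zpowers σ) (c : C) :
    (glogK K σ hgen c) ^ p = glogK K σ hgen c := by
  obtain ⟨a, ha⟩ := Subgroup.mem_zpowers_iff.mp (hgen c)
  rw [glogK_eq (K := K) hσ hgen ha]
  have h1 : (ZMod.castHom (dvd_refl p) K) ((a : ZMod p)) = ((a : ℤ) : K) :=
    map_intCast (ZMod.castHom (dvd_refl p) K) a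
  rw [← h1, ← map_pow (ZMod.castHom (dvd_refl p) K), ZMod.pow_card]

theorem exists_pow_eq (hp : 0 < p) (hσ : orderOf σ = p)
    (hgen : ∀ c : C, c ∈ Subgroup.zpowers σ) (c : C) : ∃ n : ℕ, σ ^ n = c := by
  obtain ⟨a, ha⟩ := Subgroup.mem_zpowers_iff.mp (hgen c)
  refine ⟨(a % ((orderOf σ : ℕ) : ℤ)).toNat, ?_⟩
  have hnn : 0 ≤ a % ((orderOf σ : ℕ) : ℤ) := Int.emod_nonneg a (by rw [hσ]; exact_mod_cast hp.ne')
  rw [← zpow_natCast, Int.toNat_of_nonneg hnn, zpow_mod_orderOf, ha]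

end glog

section theta

variable (K)
variable {p : ℕ} [CharP K p] {σ : C}

/-- The monoid hom sending `c = σ^n` to the Taylor shift by `n`. -/
noncomputable def tayHom (hσ : orderOf σ = p) (hgen : ∀ c : C, c ∈ Subgroup.zpowers σ) :
    C →* Module.End K K[X] where
  toFun c := (taylor (glogK K σ hgen c) : K[X] →ₗ[K] K[X])
  map_one' := by
    show (taylor (glogK K σ hgen 1) : K[X] →ₗ[K] K[X]) = 1
    rw [glogK_one K hσ hgen]
    refine LinearMap.ext fun f => ?_
    simp [taylor_zero, Module.End.one_apply]
  map_mul' c d := by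
    show (taylor (glogK K σ hgen (c * d)) : K[X] →ₗ[K] K[X]) =
      taylor (glogK K σ hgen c) * taylor (glogK K σ hgen d)
    rw [glogK_mul K hσ hgen c d]
    refine LinearMap.ext fun f => ?_
    rw [Module.End.mul_apply, taylor_taylor, add_comm]

/-- The algebra map `K[C] → End(K[X])`. -/
noncomputable def theta (hσ : orderOf σ = p) (hgen : ∀ c : C, c ∈ Subgroup.zpowers σ) :
    MonoidAlgebra K C →ₐ[K] Module.End K K[X] :=
  MonoidAlgebra.lift K (Module.End K K[X]) C (tayHom K hσ hgen)

theorem theta_of (hσ : orderOf σ = p) (hgen : ∀ c : C, c ∈ Subgroup.zpowers σ) (c : C) :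
    theta K hσ hgen (MonoidAlgebra.of K C c) =
      (taylor (glogK K σ hgen c) : K[X] →ₗ[K] K[X]) := by
  simp [theta, tayHom]

theorem theta_of_sigma (hσ : orderOf σ = p) (hgen : ∀ c : C, c ∈ Subgroup.zpowers σ) :
    theta K hσ hgen (MonoidAlgebra.of K C σ) = (taylor (1 : K) : K[X] →ₗ[K] K[X]) := by
  rw [theta_of, glogK_sigma K hσ hgen]

/-- degree is preserved by Taylor shifts -/
theorem degree_taylor (t : K) (f : K[X]) : (taylor t f).degree = f.degree := by
  rcases eq_or_ne f 0 with rfl | hf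
  · simp
  · have h1 : taylor t f ≠ 0 := fun h => hf (taylor_injective t (by simpa using h))
    rw [degree_eq_natDegree hf, degree_eq_natDegree h1, natDegree_taylor]

theorem theta_mem_degreeLT (hσ : orderOf σ = p) (hgen : ∀ c : C, c ∈ Subgroup.zpowers σ)
    (a : MonoidAlgebra K C) {n : ℕ} {f : K[X]} (hf : f ∈ degreeLT K n) :
    theta K hσ hgen a f ∈ degreeLT K n := by
  induction a using MonoidAlgebra.induction_on with
  | of c =>
    rw [theta_of]
    rw [mem_degreeLT] at hf ⊢
    rwa [degree_taylor]
  | add a b ha hb =>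
    rw [map_add, LinearMap.add_apply]
    exact Submodule.add_mem _ ha hb
  | smul r a ha =>
    rw [map_smul, LinearMap.smul_apply]
    exact Submodule.smul_mem _ r ha

end theta

section poly

variable (K)
variable (p : ℕ) [CharP K p] [hpp : Fact p.Prime]

/-- `u = X^p - X`, fixed by the Taylor shift. -/
noncomputable def uu : K[X] := X ^ p - X

/-- falling factorial polynomials -/
noncomputable def ff : ℕ → K[X]
  | 0 => 1
  | (k + 1) => ff k * (X - Polynomial.C (k : K))

theorem ff_zero : ff K 0 = 1 := rfl

theorem ff_succ (k : ℕ) : ff K (k + 1) = ff K k * (X - Polynomial.C (k : K)) := rfl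

theorem ff_monic (k : ℕ) : (ff K k).Monic := by
  induction k with
  | zero => exact monic_one
  | succ k ih => rw [ff_succ]; exact ih.mul (monic_X_sub_C _)

theorem ff_natDegree (k : ℕ) : (ff K k).natDegree = k := by
  induction k with
  | zero => simp [ff_zero]
  | succ k ih =>
    rw [ff_succ, (ff_monic K k).natDegree_mul (monic_X_sub_C _), ih, natDegree_X_sub_C]

theorem ff_mem_degreeLT (k : ℕ) : ff K k ∈ degreeLT K (k + 1) := by
  rw [mem_degreeLT, degree_eq_natDegree (ff_monic K k).ne_zero, ff_natDegree]
  exact_mod_cast lt_add_one k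

theorem uu_monic : (uu K p).Monic := by
  apply monic_X_pow_sub
  rw [degree_X]
  exact_mod_cast hpp.out.one_lt

theorem uu_natDegree : (uu K p).natDegree = p := by
  have h : (uu K p).degree = p := by
    rw [uu, degree_sub_eq_left_of_degree_lt, degree_X_pow]
    rw [degree_X_pow, degree_X]
    exact_mod_cast hpp.out.one_lt
  exact natDegree_eq_of_degree_eq_some h

theorem taylor_uu (t : K) (ht : t ^ p = t) : taylor t (uu K p) = uu K p := by
  rw [uu, taylor_apply, sub_comp, pow_comp, X_comp]
  have h1 : (X + Polynomial.C t) ^ p = X ^ p + (Polynomial.C t) ^ p := add_pow_char _ _ p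
  rw [h1, ← C_pow, ht]
  ring

theorem taylor_ff_succ (k : ℕ) :
    taylor (1 : K) (ff K (k + 1)) = (X + 1) * ff K k := by
  induction k with
  | zero =>
    rw [ff_succ, ff_zero, taylor_mul, taylor_one, map_sub, taylor_X, taylor_C]
    simp only [Nat.cast_zero, map_zero, map_one, sub_zero]
    ring
  | succ k ih =>
    rw [ff_succ K (k+1), taylor_mul, ih, map_sub, taylor_X, taylor_C]
    have h2 : (X + Polynomial.C (1:K) - Polynomial.C ((k+1:ℕ):K)) = X - Polynomial.C ((k:ℕ):K) := by
      have h3 : Polynomial.C ((k+1:ℕ):K) = Polynomial.C ((k:ℕ):K) + Polynomial.C 1 := by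
        rw [← map_add]
        norm_num
      rw [h3]
      ring
    rw [h2, ff_succ K k]
    ring

theorem delta_ff (k : ℕ) :
    taylor (1 : K) (ff K (k + 1)) - ff K (k + 1) =
      Polynomial.C ((k : K) + 1) * ff K k := by
  rw [taylor_ff_succ, ff_succ]
  have h : Polynomial.C ((k:K) + 1) = Polynomial.C (k:K) + 1 := by rw [map_add, map_one]
  rw [h]
  ring

theorem delta_mem {n : ℕ} {f : K[X]} (hf : f ∈ degreeLT K (n + 1)) :
    taylor (1 : K) f - f ∈ degreeLT K n := by
  classical
  have key : degreeLT K (n+1) ≤ Submodule.comap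
      ((taylor (1:K) : K[X] →ₗ[K] K[X]) - LinearMap.id) (degreeLT K n) := by
    rw [degreeLT_eq_span_X_pow, Submodule.span_le]
    intro g hg
    simp only [Finset.coe_image, Finset.coe_range, Set.mem_image, Set.mem_Iio] at hg
    obtain ⟨i, hi, rfl⟩ := hg
    rw [SetLike.mem_coe, Submodule.mem_comap, LinearMap.sub_apply, LinearMap.id_apply]
    have htay : taylor (1:K) (X ^ i : K[X]) = (X + Polynomial.C (1:K)) ^ i := by
      rw [taylor_apply, pow_comp, X_comp]
    rw [htay, mem_degreeLT]
    have hmon : ((X + Polynomial.C (1:K)) ^ i).Monic := (monic_X_add_C _).pow i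
    have hdeg : ((X + Polynomial.C (1:K)) ^ i).degree = (i : WithBot ℕ) := by
      rw [degree_pow, degree_X_add_C]
      simp
    have hlt : ((X + Polynomial.C (1:K)) ^ i - X ^ i).degree < (i : WithBot ℕ) := by
      rw [← hdeg]
      apply degree_sub_lt
      · rw [hdeg, degree_X_pow]
      · exact hmon.ne_zero
      · rw [hmon.leadingCoeff, (monic_X_pow i).leadingCoeff]
    exact lt_of_lt_of_le hlt (by exact_mod_cast Nat.lt_succ_iff.mp hi)
  exact key hf

theorem deltaE_apply (f : K[X]) :
    ((taylor (1:K) : K[X] →ₗ[K] K[X]) - 1) f = taylor (1:K) f - f := by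
  rw [LinearMap.sub_apply, Module.End.one_apply]

theorem deltaE_pow_zero {s : ℕ} {f : K[X]} (hf : f ∈ degreeLT K s) :
    (((taylor (1:K) : K[X] →ₗ[K] K[X]) - 1) ^ s) f = 0 := by
  induction s generalizing f with
  | zero =>
    rw [mem_degreeLT] at hf
    have h0 : f = 0 := by
      rw [← degree_eq_bot]
      exact Nat.WithBot.lt_zero_iff.mp (by exact_mod_cast hf)
    simp [h0]
  | succ s ih =>
    rw [pow_succ, Module.End.mul_apply, deltaE_apply]
    exact ih (delta_mem K hf)

theorem deltaE_pow_ff (t k : ℕ) :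
    (((taylor (1:K) : K[X] →ₗ[K] K[X]) - 1) ^ t) (ff K (k + t)) =
      Polynomial.C (((k + t).descFactorial t : ℕ) : K) * ff K k := by
  induction t with
  | zero => simp
  | succ t ih =>
    rw [pow_succ, Module.End.mul_apply, deltaE_apply]
    have h1 : ff K (k + (t+1)) = ff K ((k + t) + 1) := rfl
    rw [h1, delta_ff]
    have h2 : (Polynomial.C ((((k+t):ℕ) : K) + 1) * ff K (k + t))
        = ((((k+t):ℕ):K) + 1) • ff K (k+t) := by
      rw [smul_eq_C_mul]
    rw [h2, map_smul, ih, smul_eq_C_mul,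
      show k + (t+1) = (k+t)+1 from rfl, Nat.succ_descFactorial_succ]
    have h3 : Polynomial.C (((((k+t)+1) * (k+t).descFactorial t : ℕ)) : K)
        = Polynomial.C ((((k+t):ℕ):K) + 1) * Polynomial.C (((k+t).descFactorial t : ℕ) : K) := by
      rw [← map_mul]
      congr 1
      push_cast
      ring
    rw [h3]
    ring

/-- the generator polynomials -/
noncomputable def gen (s ℓ : ℕ) : K[X] :=
  match s with
  | 0 => 0
  | (s + 1) => (uu K p) ^ ℓ * ff K s

theorem gen_mem (s ℓ : ℕ) : gen K p s ℓ ∈ degreeLT K (ℓ * p + s) := by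
  match s with
  | 0 => exact Submodule.zero_mem _
  | (s + 1) =>
    show (uu K p) ^ ℓ * ff K s ∈ _
    have hmon : ((uu K p) ^ ℓ * ff K s).Monic := ((uu_monic K p).pow ℓ).mul (ff_monic K s)
    have hdeg : ((uu K p) ^ ℓ * ff K s).natDegree = ℓ * p + s := by
      rw [((uu_monic K p).pow ℓ).natDegree_mul (ff_monic K s),
        (uu_monic K p).natDegree_pow, ff_natDegree, uu_natDegree]
    rw [mem_degreeLT, degree_eq_natDegree hmon.ne_zero, hdeg]
    exact_mod_cast by omega

theorem descFactorial_ne_zero {t k : ℕ} (h : k + t < p) :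
    ((((k + t).descFactorial t : ℕ)) : K) ≠ 0 := by
  intro h0
  have hdvd : p ∣ (k + t).descFactorial t := (CharP.cast_eq_zero_iff K p _).mp h0
  have hdvd3 : (k + t).descFactorial t ∣ Nat.factorial (k + t) :=
    ⟨Nat.factorial (k + t - t), by
      rw [mul_comm, Nat.factorial_mul_descFactorial (Nat.le_add_left t k)]⟩
  have hdvd2 : p ∣ Nat.factorial (k + t) := hdvd.trans hdvd3
  have := (Nat.Prime.dvd_factorial hpp.out).mp hdvd2
  omega

theorem span_of_monics {S : Submodule K K[X]} {m : ℕ}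
    (h : ∀ d, d < m → ∃ g, g ∈ S ∧ g.Monic ∧ g.natDegree = d) :
    degreeLT K m ≤ S := by
  have key : ∀ n, n ≤ m → ∀ f : K[X], f.degree < (n : ℕ) → f ∈ S := by
    intro n
    induction n with
    | zero =>
      intro _ f hf
      have h0 : f = 0 := by
        rw [← degree_eq_bot]
        exact Nat.WithBot.lt_zero_iff.mp (by exact_mod_cast hf)
      rw [h0]; exact Submodule.zero_mem _
    | succ n ih =>
      intro hn f hf
      obtain ⟨g, hgS, hgm, hgd⟩ := h n (by omega)
      have hcoe : ∀ i : ℕ, n + 1 ≤ i → f.coeff i = 0 := by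
        intro i hi
        apply coeff_eq_zero_of_degree_lt
        exact lt_of_lt_of_le hf (by exact_mod_cast hi)
      have hf' : (f - Polynomial.C (f.coeff n) * g).degree < (n : ℕ) := by
        rw [degree_lt_iff_coeff_zero]
        intro i hi
        have hi' : n ≤ i := by exact_mod_cast hi
        rcases eq_or_lt_of_le hi' with heq | hlt
        · subst heq
          rw [coeff_sub, coeff_C_mul]
          have hg1 : g.coeff n = 1 := by
            conv_lhs => rw [← hgd]
            exact hgm.coeff_natDegree
          rw [hg1, mul_one, sub_self]
        · have hgz : g.coeff i = 0 := coeff_eq_zero_of_natDegree_lt (by omega)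
          rw [coeff_sub, coeff_C_mul, hcoe i (by omega), hgz]
          ring
      have hmem := ih (by omega) _ hf'
      have : f = (f - Polynomial.C (f.coeff n) * g) + Polynomial.C (f.coeff n) * g := by ring
      rw [this]
      refine Submodule.add_mem _ hmem ?_
      rw [← smul_eq_C_mul]
      exact Submodule.smul_mem _ _ hgS
  intro f hf
  exact key m le_rfl f (mem_degreeLT.mp hf)

end poly


section quot

variable (K)
variable {p : ℕ} [CharP K p] [hpp : Fact p.Prime] {σ : C}

/-- `y = σ - 1` in the monoid algebra -/
noncomputable def yy (σ : C) : MonoidAlgebra K C := MonoidAlgebra.of K C σ - 1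

theorem charP_R : CharP (MonoidAlgebra K C) p :=
  charP_of_injective_algebraMap
    (algebraMap K (MonoidAlgebra K C)).injective p

theorem yy_pow_p (hσ : orderOf σ = p) : (yy K σ) ^ p = 0 := by
  haveI := charP_R (K := K) (C := C) (p := p)
  rw [yy, sub_pow_char, one_pow, ← map_pow, ← hσ, pow_orderOf_eq_one, map_one, sub_self]

theorem theta_yy (hσ : orderOf σ = p) (hgen : ∀ c : C, c ∈ Subgroup.zpowers σ) :
    theta K hσ hgen (yy K σ) = (taylor (1:K) : K[X] →ₗ[K] K[X]) - 1 := by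
  rw [yy, map_sub, map_one, theta_of_sigma]

theorem taylor_uu_pow_mul (t : K) (ht : t ^ p = t) (ℓ : ℕ) (f : K[X]) :
    taylor t ((uu K p) ^ ℓ * f) = (uu K p) ^ ℓ * taylor t f := by
  rw [taylor_mul]
  congr 1
  rw [taylor_apply, pow_comp, ← taylor_apply, taylor_uu K p t ht]

theorem theta_uu_pow_mul (hσ : orderOf σ = p) (hgen : ∀ c : C, c ∈ Subgroup.zpowers σ)
    (a : MonoidAlgebra K C) (ℓ : ℕ) (f : K[X]) :
    theta K hσ hgen a ((uu K p) ^ ℓ * f) = (uu K p) ^ ℓ * theta K hσ hgen a f := by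
  induction a using MonoidAlgebra.induction_on with
  | of c =>
    rw [theta_of]
    exact taylor_uu_pow_mul K _ (glogK_pow_char K hσ hgen c) ℓ f
  | add a b ha hb =>
    rw [map_add, LinearMap.add_apply, LinearMap.add_apply, ha, hb, mul_add]
  | smul r a ha =>
    rw [map_smul, LinearMap.smul_apply, LinearMap.smul_apply, ha, mul_smul_comm]

theorem theta_pow_yy_gen (hσ : orderOf σ = p) (hgen : ∀ c : C, c ∈ Subgroup.zpowers σ)
    (s ℓ : ℕ) : theta K hσ hgen ((yy K σ) ^ s) (gen K p s ℓ) = 0 := by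
  match s with
  | 0 =>
    show theta K hσ hgen ((yy K σ) ^ 0) (0 : K[X]) = 0
    rw [map_zero]
  | (s + 1) =>
    show theta K hσ hgen ((yy K σ) ^ (s+1)) ((uu K p) ^ ℓ * ff K s) = 0
    rw [theta_uu_pow_mul K hσ hgen, map_pow, theta_yy K hσ hgen,
      deltaE_pow_zero K (ff_mem_degreeLT K s), mul_zero]

/-- evaluation of theta on the generator, as a linear map -/
noncomputable def phi (hσ : orderOf σ = p) (hgen : ∀ c : C, c ∈ Subgroup.zpowers σ)
    (s ℓ : ℕ) : MonoidAlgebra K C →ₗ[K] K[X] where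
  toFun a := theta K hσ hgen a (gen K p s ℓ)
  map_add' a b := by simp only [map_add, LinearMap.add_apply]
  map_smul' r a := by simp only [map_smul, LinearMap.smul_apply, RingHom.id_apply]

theorem phi_ker (hσ : orderOf σ = p) (hgen : ∀ c : C, c ∈ Subgroup.zpowers σ) (s ℓ : ℕ) :
    (Ideal.span {(yy K σ) ^ s}).restrictScalars K ≤
      LinearMap.ker (phi K hσ hgen s ℓ) := by
  intro x hx
  rw [Submodule.restrictScalars_mem] at hx
  obtain ⟨c, rfl⟩ := Ideal.mem_span_singleton'.mp hx
  rw [LinearMap.mem_ker]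
  show theta K hσ hgen (c * (yy K σ) ^ s) (gen K p s ℓ) = 0
  rw [map_mul, Module.End.mul_apply, theta_pow_yy_gen K hσ hgen s ℓ, map_zero]

/-- the building block of the equivalence: `J_s → K[X]`, `a ↦ θ(a)(u^ℓ ff_{s-1})`. -/
noncomputable def psi (hσ : orderOf σ = p) (hgen : ∀ c : C, c ∈ Subgroup.zpowers σ)
    (s ℓ : ℕ) :
    (MonoidAlgebra K C ⧸ Ideal.span {(MonoidAlgebra.of K C σ - 1) ^ s}) →ₗ[K] K[X] :=
  (Submodule.liftQ ((Ideal.span {(yy K σ) ^ s}).restrictScalars K)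
      (phi K hσ hgen s ℓ) (phi_ker K hσ hgen s ℓ)).comp
    ((Submodule.Quotient.restrictScalarsEquiv K
      (Ideal.span {(yy K σ) ^ s} : Ideal (MonoidAlgebra K C))).symm.toLinearMap)

theorem psi_mk (hσ : orderOf σ = p) (hgen : ∀ c : C, c ∈ Subgroup.zpowers σ)
    (s ℓ : ℕ) (a : MonoidAlgebra K C) :
    psi K hσ hgen s ℓ (Submodule.Quotient.mk a) =
      theta K hσ hgen a (gen K p s ℓ) := rfl

theorem finite_C {p : ℕ} (hp : 0 < p) {σ : C} (hσ : orderOf σ = p)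
    (hgen : ∀ c : C, c ∈ Subgroup.zpowers σ) : Finite C := by
  apply Finite.of_surjective (fun k : Fin p => σ ^ (k : ℕ))
  intro c
  obtain ⟨n, hn⟩ := exists_pow_eq hp hσ hgen c
  refine ⟨⟨n % p, ?_⟩, ?_⟩
  · exact Nat.mod_lt _ hp
  · show σ ^ (n % p) = c
    rw [← hσ, pow_mod_orderOf]
    exact hn

theorem jmod_span (hσ : orderOf σ = p) (hgen : ∀ c : C, c ∈ Subgroup.zpowers σ) (s : ℕ) :
    Submodule.span K (Set.range (fun k : Fin s =>
      (Submodule.Quotient.mk ((yy K σ) ^ (k : ℕ)) :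
        MonoidAlgebra K C ⧸ Ideal.span {(MonoidAlgebra.of K C σ - 1) ^ s}))) = ⊤ := by
  rw [eq_top_iff]
  rintro x -
  obtain ⟨a, rfl⟩ := Submodule.Quotient.mk_surjective _ x
  induction a using MonoidAlgebra.induction_on with
  | of c =>
    obtain ⟨n, hn⟩ := exists_pow_eq hpp.out.pos hσ hgen c
    have h1 : MonoidAlgebra.of K C c = (yy K σ + 1) ^ n := by
      rw [← hn, map_pow, yy, sub_add_cancel]
    rw [show (Submodule.Quotient.mk (MonoidAlgebra.of K C c) :
        MonoidAlgebra K C ⧸ Ideal.span {(MonoidAlgebra.of K C σ - 1) ^ s}) =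
      Ideal.Quotient.mk _ (MonoidAlgebra.of K C c) from rfl, h1, add_pow, map_sum]
    apply Submodule.sum_mem
    intro k hk
    rw [one_pow, mul_one, mul_comm ((yy K σ) ^ k), ← nsmul_eq_mul, map_nsmul]
    by_cases hks : k < s
    · rw [← Nat.cast_smul_eq_nsmul K]
      exact Submodule.smul_mem _ _ (Submodule.subset_span ⟨⟨k, hks⟩, rfl⟩)
    · have h0 : (Ideal.Quotient.mk (Ideal.span {(MonoidAlgebra.of K C σ - 1) ^ s}))
          ((yy K σ) ^ k) = 0 := by
        rw [Ideal.Quotient.eq_zero_iff_mem]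
        apply Ideal.mem_span_singleton.mpr
        rw [show (MonoidAlgebra.of K C σ - 1) = yy K σ from rfl]
        exact pow_dvd_pow _ (le_of_not_gt hks)
      rw [h0, smul_zero]
      exact Submodule.zero_mem _
  | add a b ha hb =>
    rw [Submodule.Quotient.mk_add]
    exact Submodule.add_mem _ ha hb
  | smul r a ha =>
    rw [Submodule.Quotient.mk_smul]
    exact Submodule.smul_mem _ _ ha

theorem jmod_finrank_le (hσ : orderOf σ = p) (hgen : ∀ c : C, c ∈ Subgroup.zpowers σ)
    (s : ℕ) :
    Module.finrank K (MonoidAlgebra K C ⧸ Ideal.span {(MonoidAlgebra.of K C σ - 1) ^ s})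
      ≤ s := by
  have h := finrank_le_of_span_eq_top (jmod_span K hσ hgen s)
  simpa using h

theorem psi_mem (hσ : orderOf σ = p) (hgen : ∀ c : C, c ∈ Subgroup.zpowers σ)
    (s ℓ : ℕ) (z : MonoidAlgebra K C ⧸ Ideal.span {(MonoidAlgebra.of K C σ - 1) ^ s}) :
    psi K hσ hgen s ℓ z ∈ degreeLT K (ℓ * p + s) := by
  obtain ⟨a, rfl⟩ := Submodule.Quotient.mk_surjective _ z
  rw [psi_mk]
  exact theta_mem_degreeLT K hσ hgen a (gen_mem K p s ℓ)

theorem psi_sigma (hσ : orderOf σ = p) (hgen : ∀ c : C, c ∈ Subgroup.zpowers σ)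
    (s ℓ : ℕ) (z : MonoidAlgebra K C ⧸ Ideal.span {(MonoidAlgebra.of K C σ - 1) ^ s}) :
    psi K hσ hgen s ℓ (MonoidAlgebra.of K C σ • z) =
      taylor (1:K) (psi K hσ hgen s ℓ z) := by
  obtain ⟨a, rfl⟩ := Submodule.Quotient.mk_surjective _ z
  have h1 : MonoidAlgebra.of K C σ • (Submodule.Quotient.mk a :
      MonoidAlgebra K C ⧸ Ideal.span {(MonoidAlgebra.of K C σ - 1) ^ s}) =
      Submodule.Quotient.mk (MonoidAlgebra.of K C σ * a) := by
    rw [← Submodule.Quotient.mk_smul, smul_eq_mul]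
  rw [h1, psi_mk, psi_mk, map_mul, Module.End.mul_apply, theta_of_sigma]

/-- The map `J_p^q × J_r → K[X]`. -/
noncomputable def bigMap (hσ : orderOf σ = p) (hgen : ∀ c : C, c ∈ Subgroup.zpowers σ)
    (q r : ℕ) :
    ((Fin q → MonoidAlgebra K C ⧸ Ideal.span {(MonoidAlgebra.of K C σ - 1) ^ p}) ×
      (MonoidAlgebra K C ⧸ Ideal.span {(MonoidAlgebra.of K C σ - 1) ^ r})) →ₗ[K] K[X] where
  toFun x := (∑ j : Fin q, psi K hσ hgen p (j : ℕ) (x.1 j)) + psi K hσ hgen r q x.2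
  map_add' x y := by
    simp only [Prod.fst_add, Prod.snd_add, Pi.add_apply, map_add, Finset.sum_add_distrib]
    ring
  map_smul' c x := by
    simp only [Prod.smul_fst, Prod.smul_snd, Pi.smul_apply, map_smul, RingHom.id_apply,
      Finset.smul_sum, smul_add]

theorem bigMap_apply (hσ : orderOf σ = p) (hgen : ∀ c : C, c ∈ Subgroup.zpowers σ)
    (q r : ℕ) (x) :
    bigMap K hσ hgen q r x
      = (∑ j : Fin q, psi K hσ hgen p (j : ℕ) (x.1 j)) + psi K hσ hgen r q x.2 := rfl

theorem bigMap_mem (hσ : orderOf σ = p) (hgen : ∀ c : C, c ∈ Subgroup.zpowers σ)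
    {m q r : ℕ} (hr : r < p) (hqr : m = q * p + r) (x) :
    bigMap K hσ hgen q r x ∈ degreeLT K m := by
  rw [bigMap_apply]
  apply Submodule.add_mem
  · apply Submodule.sum_mem
    intro j _
    apply degreeLT_mono (n := m) ?_ (psi_mem K hσ hgen p (j : ℕ) (x.1 j))
    have h1 : (j : ℕ) * p + p = ((j : ℕ) + 1) * p := by ring
    have h2 : ((j : ℕ) + 1) * p ≤ q * p := Nat.mul_le_mul_right p j.2
    omega
  · apply degreeLT_mono (n := m) (by omega) (psi_mem K hσ hgen r q x.2)

/-- the image of the "Jordan basis" vectors under `bigMap`, in block `(s,ℓ)`: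
a nonzero multiple of `u^ℓ ff_i`. -/
theorem psi_yy_pow (hσ : orderOf σ = p) (hgen : ∀ c : C, c ∈ Subgroup.zpowers σ)
    {s : ℕ} (ℓ i j : ℕ) (hij : i + j + 1 = s) :
    psi K hσ hgen s ℓ (Submodule.Quotient.mk ((yy K σ) ^ j)) =
      Polynomial.C (((i + j).descFactorial j : ℕ) : K) *
        ((uu K p) ^ ℓ * ff K i) := by
  subst hij
  rw [psi_mk]
  have hgs : gen K p (i + j + 1) ℓ = (uu K p) ^ ℓ * ff K (i + j) := rfl
  rw [hgs, theta_uu_pow_mul K hσ hgen, map_pow, theta_yy K hσ hgen, deltaE_pow_ff]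
  ring

end quot

section main

variable (K)
variable {p : ℕ} [CharP K p] [hpp : Fact p.Prime] {σ : C}

theorem bigMap_range (hσ : orderOf σ = p) (hgen : ∀ c : C, c ∈ Subgroup.zpowers σ)
    {m q r : ℕ} (hr : r < p) (hqr : m = q * p + r) :
    degreeLT K m ≤ LinearMap.range (bigMap K hσ hgen q r) := by
  apply span_of_monics
  intro d hd
  refine ⟨(uu K p) ^ (d / p) * ff K (d % p), ?_, ?_, ?_⟩
  · -- in the range
    have hip : d % p < p := Nat.mod_lt _ hpp.out.pos
    have hdm : p * (d / p) + d % p = d := Nat.div_add_mod d p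
    by_cases hjq : d / p < q
    · -- block d / p of the first component
      set t := p - 1 - (d % p) with ht
      set c : K := (((d % p + t).descFactorial t : ℕ) : K) with hc
      have hcne : c ≠ 0 := by
        rw [hc]
        exact descFactorial_ne_zero K p (by omega)
      set x := ((Pi.single (⟨d / p, hjq⟩ : Fin q)
        (Submodule.Quotient.mk ((yy K σ) ^ t)) : Fin q →
          MonoidAlgebra K C ⧸ Ideal.span {(MonoidAlgebra.of K C σ - 1) ^ p}),
        (0 : MonoidAlgebra K C ⧸ Ideal.span {(MonoidAlgebra.of K C σ - 1) ^ r})) with hx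
      have hval : bigMap K hσ hgen q r x = Polynomial.C c * ((uu K p) ^ (d / p) * ff K (d % p)) := by
        rw [bigMap_apply, hx]
        simp only [map_zero, add_zero]
        rw [Finset.sum_eq_single_of_mem (⟨d / p, hjq⟩ : Fin q) (Finset.mem_univ _)]
        · rw [Pi.single_eq_same]
          exact psi_yy_pow K hσ hgen (d / p) (d % p) t (by omega)
        · intro b _ hb
          rw [Pi.single_eq_of_ne hb, map_zero]
      refine ⟨c⁻¹ • x, ?_⟩
      rw [map_smul, hval, smul_eq_C_mul, ← mul_assoc, ← map_mul, inv_mul_cancel₀ hcne, map_one,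
        one_mul]
    · -- the J_r block
      have hqple : q * p ≤ p * (d / p) := by
        have h2 : q ≤ d / p := le_of_not_gt hjq
        calc q * p = p * q := by ring
        _ ≤ p * (d / p) := Nat.mul_le_mul_left p h2
      have hjeq : d / p = q := by
        by_contra hne
        have h3 : q + 1 ≤ d / p := by omega
        have h4 : p * (q + 1) ≤ p * (d / p) := Nat.mul_le_mul_left p h3
        have h5 : p * (q + 1) = q * p + p := by ring
        omega
      have hir : d % p < r := by
        rw [hjeq] at hdm
        have : p * q = q * p := by ring
        omega
      have hrp : 0 < r := by omega
      set t := r - 1 - (d % p) with ht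
      set c : K := (((d % p + t).descFactorial t : ℕ) : K) with hc
      have hcne : c ≠ 0 := by
        rw [hc]
        exact descFactorial_ne_zero K p (by omega)
      set x := ((0 : Fin q →
          MonoidAlgebra K C ⧸ Ideal.span {(MonoidAlgebra.of K C σ - 1) ^ p}),
        (Submodule.Quotient.mk ((yy K σ) ^ t) :
          MonoidAlgebra K C ⧸ Ideal.span {(MonoidAlgebra.of K C σ - 1) ^ r})) with hx
      have hval : bigMap K hσ hgen q r x
          = Polynomial.C c * ((uu K p) ^ q * ff K (d % p)) := by
        rw [bigMap_apply, hx]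
        simp only [Pi.zero_apply, map_zero, Finset.sum_const_zero, zero_add]
        exact psi_yy_pow K hσ hgen q (d % p) t (by omega)
      refine ⟨c⁻¹ • x, ?_⟩
      rw [map_smul, hval, smul_eq_C_mul, ← mul_assoc, ← map_mul, inv_mul_cancel₀ hcne, map_one,
        one_mul, hjeq]
  · exact ((uu_monic K p).pow _).mul (ff_monic K _)
  · rw [((uu_monic K p).pow _).natDegree_mul (ff_monic K _),
      (uu_monic K p).natDegree_pow, uu_natDegree, ff_natDegree]
    have h5 := Nat.div_add_mod d p
    have h6 : d / p * p = p * (d / p) := Nat.mul_comm _ _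
    omega

end main

end Stmt10

/-- Let `K` have characteristic `p`, let `m = qp + r` with `0 ≤ r < p`,
and let the cyclic group `C = ⟨σ⟩` of order `p` act on the space `V_m` of polynomials of
degree `< m` by `σ·F(T) = F(T+1)`.  Then `V_m ≅ J_p^q ⊕ J_r` as `K[C]`-modules. -/
theorem polynomials_degreeLT_module_structure
    (p : ℕ) (hp : p.Prime)
    (K : Type) [Field K] [CharP K p]
    (C : Type) [CommGroup C] (σ : C) (hσ : orderOf σ = p)
    (hgen : ∀ c : C, c ∈ Subgroup.zpowers σ)
    (m q r : ℕ) (hm : 1 ≤ m) (hr : r < p) (hqr : m = q * p + r) :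
    ∃ e : ((Fin q → Jmod K C σ p) × Jmod K C σ r) ≃ₗ[K] (Polynomial.degreeLT K m),
      ∀ x : (Fin q → Jmod K C σ p) × Jmod K C σ r,
        ((e (MonoidAlgebra.of K C σ • x) : K[X])) = Polynomial.taylor 1 (e x : K[X]) := by
  haveI hpF : Fact p.Prime := ⟨hp⟩
  haveI : Finite C := Stmt10.finite_C hp.pos hσ hgen
  haveI : Module.Finite K (MonoidAlgebra K C) :=
    Module.Finite.equiv ((Finsupp.linearEquivFunOnFinite K K C).symm ≪≫ₗ (MonoidAlgebra.coeffLinearEquiv K).symm)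
  haveI hfinp : Module.Finite K (Jmod K C σ p) :=
    Module.Finite.of_surjective ((Submodule.mkQ _).restrictScalars K)
      (Submodule.Quotient.mk_surjective _)
  haveI hfinr : Module.Finite K (Jmod K C σ r) :=
    Module.Finite.of_surjective ((Submodule.mkQ _).restrictScalars K)
      (Submodule.Quotient.mk_surjective _)
  set F := Stmt10.bigMap K hσ hgen q r with hF
  set E := F.codRestrict (degreeLT K m) (fun x => Stmt10.bigMap_mem K hσ hgen hr hqr x) with hE
  have hsurj : Function.Surjective E := by
    intro v
    obtain ⟨x, hx⟩ := Stmt10.bigMap_range K hσ hgen hr hqr v.2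
    exact ⟨x, Subtype.ext hx⟩
  have hV : Module.finrank K (degreeLT K m) = m := by
    rw [(Polynomial.degreeLTEquiv K m).finrank_eq, Module.finrank_fin_fun]
  have hP : Module.finrank K ((Fin q → Jmod K C σ p) × Jmod K C σ r) ≤ m := by
    rw [Module.finrank_prod, Module.finrank_pi_fintype]
    have h1 : (∑ j : Fin q, Module.finrank K (Jmod K C σ p)) ≤ q * p := by
      calc (∑ j : Fin q, Module.finrank K (Jmod K C σ p))
          ≤ (∑ j : Fin q, p) :=
            Finset.sum_le_sum fun j _ => Stmt10.jmod_finrank_le K hσ hgen p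
        _ = q * p := by rw [Finset.sum_const, Finset.card_univ, Fintype.card_fin, smul_eq_mul]
    have h2 : Module.finrank K (Jmod K C σ r) ≤ r := Stmt10.jmod_finrank_le K hσ hgen r
    omega
  have hrank := LinearMap.finrank_range_add_finrank_ker E
  rw [LinearMap.range_eq_top.mpr hsurj, finrank_top, hV] at hrank
  have hrank' : m + Module.finrank K (LinearMap.ker E)
      = Module.finrank K ((Fin q → Jmod K C σ p) × Jmod K C σ r) := hrank
  have hker0 : Module.finrank K (LinearMap.ker E) = 0 := by omega
  have hker : LinearMap.ker E = ⊥ := Submodule.finrank_eq_zero.mp hker0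
  have hbij : Function.Bijective E := ⟨LinearMap.ker_eq_bot.mp hker, hsurj⟩
  refine ⟨LinearEquiv.ofBijective E hbij, ?_⟩
  intro x
  have hcoe : ∀ z, ((LinearEquiv.ofBijective E hbij z : degreeLT K m) : K[X]) = F z :=
    fun z => rfl
  rw [hcoe, hcoe]
  rw [Stmt10.bigMap_apply, Stmt10.bigMap_apply, map_add, map_sum]
  congr 1
  · refine Finset.sum_congr rfl fun j _ => ?_
    rw [show (MonoidAlgebra.of K C σ • x).1 j = MonoidAlgebra.of K C σ • (x.1 j) from rfl,
      Stmt10.psi_sigma]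
  · rw [show (MonoidAlgebra.of K C σ • x).2 = MonoidAlgebra.of K C σ • x.2 from rfl,
      Stmt10.psi_sigma]
end

section
/- Let p be a prime, K a field of characteristic p, and A a cyclic group of order p. For every integer n ≥ 1, the free module K[A]^n does not contain an internal direct sum of n+1 nonzero K[A]-submodules: if M_1, …, M_{n+1} are K[A]-submodules of K[A]^n whose sum is direct, then at least one M_i is zero. In particular (n = 1), K[A] does not contain the direct sum of two nonzero K[A]-submodules. -/
/-- Let `K` be a field of characteristic `p` and `A` a cyclic group of
order `p`.  For every `n ≥ 1`, the free module `K[A]^n` does not contain an internal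
direct sum of `n+1` nonzero `K[A]`-submodules. -/
theorem no_direct_sum_of_succ_nonzero_submodules
    (p : ℕ) (hp : p.Prime)
    (K : Type) [Field K] [CharP K p]
    (A : Type) [Group A] [IsCyclic A] (hA : Nat.card A = p)
    (n : ℕ) (hn : 1 ≤ n)
    (M : Fin (n + 1) → Submodule (MonoidAlgebra K A) (Fin n → MonoidAlgebra K A))
    (hindep : iSupIndep M) :
    ∃ i, M i = ⊥ := by
  by_contra hbot
  push_neg at hbot
  haveI : Fact p.Prime := ⟨hp⟩
  haveI : Finite A := Nat.finite_of_card_ne_zero (by rw [hA]; exact hp.pos.ne')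
  haveI : CharP (MonoidAlgebra K A) p :=
    charP_of_injective_algebraMap (algebraMap K (MonoidAlgebra K A)).injective p
  obtain ⟨g, hg⟩ := IsCyclic.exists_generator (α := A)
  set x : MonoidAlgebra K A := MonoidAlgebra.of K A g - 1 with hxdef
  have hgp : g ^ p = 1 := by rw [← hA]; exact pow_card_eq_one'
  have hx : x ^ p = 0 := by
    rw [hxdef, sub_pow_char_of_commute _ (Commute.one_right _), one_pow,
      ← map_pow, hgp, map_one, sub_self]
  -- every nonzero submodule contains a nonzero element killed by x
  have key1 : ∀ i, ∃ v : Fin n → MonoidAlgebra K A, v ∈ M i ∧ v ≠ 0 ∧ x • v = 0 := by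
    intro i
    classical
    obtain ⟨m, hm, hm0⟩ := Submodule.exists_mem_ne_zero_of_ne_bot (hbot i)
    have hP : ∃ k, x ^ k • m = 0 := ⟨p, by rw [hx, zero_smul]⟩
    set k := Nat.find hP with hkdef
    have hk0 : k ≠ 0 := by
      intro h
      have := Nat.find_spec hP
      rw [← hkdef, h, pow_zero, one_smul] at this
      exact hm0 this
    have hk1 : k - 1 + 1 = k := Nat.succ_pred_eq_of_pos (Nat.pos_of_ne_zero hk0)
    refine ⟨x ^ (k - 1) • m, Submodule.smul_mem _ _ hm, ?_, ?_⟩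
    · exact Nat.find_min hP (by omega)
    · rw [smul_smul, ← pow_succ', hk1]
      exact Nat.find_spec hP
  -- an element of K[A] killed by x has constant coefficients
  have key2 : ∀ y : MonoidAlgebra K A, x * y = 0 → ∀ a : A, y.coeff a = y.coeff 1 := by
    intro y hy a
    have h1 : MonoidAlgebra.of K A g * y = y := by
      rw [hxdef, sub_mul, one_mul, sub_eq_zero] at hy
      exact hy
    have hshift : ∀ b : A, y.coeff (g⁻¹ * b) = y.coeff b := by
      intro b
      have h2 : (MonoidAlgebra.of K A g * y).coeff b = y.coeff b := by rw [h1]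
      rwa [MonoidAlgebra.of_apply, MonoidAlgebra.coeff_single_mul_apply, one_mul] at h2
    obtain ⟨k, hk⟩ := hg a
    have hall : ∀ k : ℤ, y.coeff (g ^ k) = y.coeff 1 := by
      intro k
      induction k using Int.induction_on with
      | zero => simp
      | succ k ih =>
          have := hshift (g ^ ((k : ℤ) + 1))
          rw [show g⁻¹ * g ^ ((k : ℤ) + 1) = g ^ (k : ℤ) by group] at this
          rw [← this]
          exact ih
      | pred k ih =>
          have := hshift (g ^ (-(k : ℤ)))
          rw [show g⁻¹ * g ^ (-(k : ℤ)) = g ^ (-(k : ℤ) - 1) by group] at this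
          rw [this]
          exact ih
    rw [← hk]
    exact hall k
  choose v hvM hv0 hvx using fun i => key1 i
  set w : Fin (n + 1) → (Fin n → K) := fun i k => (v i k).coeff 1 with hwdef
  have hconst : ∀ i k (a : A), (v i k).coeff a = (v i k).coeff 1 := by
    intro i k a
    apply key2
    have := congr_fun (hvx i) k
    rwa [Pi.smul_apply, smul_eq_mul, Pi.zero_apply] at this
  have hwli : LinearIndependent K w := by
    rw [Fintype.linearIndependent_iff]
    intro c hc
    -- lift the relation to K[A]
    have hrel : ∑ j, (MonoidAlgebra.single (1 : A) (c j)) • v j = 0 := by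
      funext k
      rw [Finset.sum_apply, Pi.zero_apply]
      ext a
      rw [MonoidAlgebra.coeff_sum, Finsupp.coe_finset_sum, Finset.sum_apply, MonoidAlgebra.coeff_zero, Finsupp.coe_zero, Pi.zero_apply]
      have : ∀ j, (((MonoidAlgebra.single (1 : A) (c j)) • v j) k).coeff a = c j * (v j k).coeff 1 := by
        intro j
        rw [Pi.smul_apply, smul_eq_mul, MonoidAlgebra.coeff_single_mul_apply, inv_one, one_mul,
          hconst]
      rw [Finset.sum_congr rfl fun j _ => this j]
      have := congr_fun hc k
      rw [Finset.sum_apply, Pi.zero_apply] at this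
      simpa using this
    intro i
    by_contra hci
    -- isolate term i
    have hmem : (MonoidAlgebra.single (1 : A) (c i)) • v i ∈
        M i ⊓ ⨆ j, ⨆ _ : j ≠ i, M j := by
      constructor
      · exact Submodule.smul_mem _ _ (hvM i)
      · have : (MonoidAlgebra.single (1 : A) (c i)) • v i
            = -∑ j ∈ Finset.univ.erase i, (MonoidAlgebra.single (1 : A) (c j)) • v j := by
          have := hrel
          rw [← Finset.add_sum_erase _ _ (Finset.mem_univ i)] at this
          exact eq_neg_of_add_eq_zero_left this
        rw [this]
        refine Submodule.neg_mem _ (Submodule.sum_mem _ fun j hj => ?_)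
        exact Submodule.mem_iSup_of_mem j (Submodule.mem_iSup_of_mem
          (Finset.ne_of_mem_erase hj) (Submodule.smul_mem _ _ (hvM j)))
    have hzero : (MonoidAlgebra.single (1 : A) (c i)) • v i = 0 := by
      have hd := hindep i
      rw [disjoint_iff] at hd
      rw [← Submodule.mem_bot (MonoidAlgebra K A), ← hd]
      exact hmem
    have : v i = 0 := by
      have h2 := congr_arg (fun z => (MonoidAlgebra.single (1 : A) (c i)⁻¹) • z) hzero
      simp only [smul_smul, smul_zero] at h2
      rwa [MonoidAlgebra.single_mul_single, inv_mul_cancel₀ hci, mul_one,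
        ← MonoidAlgebra.one_def, one_smul] at h2
    exact hv0 i this
  have hcard := hwli.fintype_card_le_finrank
  rw [Module.finrank_fin_fun, Fintype.card_fin] at hcard
  omega
end
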